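/- Termination of the synthesis algorithm: for every finite assumption set Γ and all session contracts ρ and σ, the recursive computation of Synth(Γ,ρ,σ) terminates; i.e., the recursion defining Synth is well-founded, so Synth is a total function returning a finite set of orchestrators. -/

import Mathlib

/-! Core formalisation: session contracts, session orchestrators, orchestrated systems,
    buffers, (finite and infinite) sequences of orchestration actions, respectfulness,
    and the compliance relations. Names are natural numbers. Recursion binders use
    de Bruijn indices (`var n`, with `mu` binding index 0); equi-recursive identification
    of `rec x.σ` with its unfolding is realised by unfolding rules in the LTSs. -/

abbrev Name := ℕ

/-- Actions of session contracts: an input `a` or an output `ā`. -/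
inductive Act : Type where
  | inp : Name → Act
  | out : Name → Act
deriving DecidableEq

/-- Orchestration actions:
    `cIn a` = ⟨a,ε⟩, `cSync a` = ⟨a,ā⟩ (category ι_L);
    `sIn a` = ⟨ε,a⟩, `sSync a` = ⟨ā,a⟩ (category ι_R);
    `cOut a` = ⟨ā,ε⟩, `sOut a` = ⟨ε,ā⟩ (category o). -/
inductive OAct : Type where
  | cIn   : Name → OAct
  | cSync : Name → OAct
  | sIn   : Name → OAct
  | sSync : Name → OAct
  | cOut  : Name → OAct
  | sOut  : Name → OAct
deriving DecidableEq

def OAct.catL : OAct → Prop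
  | .cIn _ => True
  | .cSync _ => True
  | _ => False

def OAct.catR : OAct → Prop
  | .sIn _ => True
  | .sSync _ => True
  | _ => False

def OAct.catO : OAct → Prop
  | .cOut _ => True
  | .sOut _ => True
  | _ => False

/-- Raw session contracts: `one` = 1 (success), `ext l` = external choice a₁.σ₁+⋯+aₙ.σₙ,
    `int l` = internal choice ā₁.σ₁⊕⋯⊕āₙ.σₙ, de Bruijn variables and recursion. -/
inductive SC : Type where
  | one : SC
  | ext : List (Name × SC) → SC
  | int : List (Name × SC) → SC
  | var : ℕ → SC
  | mu : SC → SC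

namespace SC

/-- Substitution of the (closed) term `u` for the variable of de Bruijn index `k`. -/
def subst (u : SC) : SC → ℕ → SC
  | SC.one, _ => SC.one
  | SC.ext l, k => SC.ext (l.attach.map fun p => (p.1.1, subst u p.1.2 k))
  | SC.int l, k => SC.int (l.attach.map fun p => (p.1.1, subst u p.1.2 k))
  | SC.var x, k => if x = k then u else SC.var x
  | SC.mu b, k => SC.mu (subst u b (k + 1))
termination_by s _ => sizeOf s
decreasing_by
  · obtain ⟨⟨a1, s1⟩, hp⟩ := p
    have := List.sizeOf_lt_of_mem hp
    simp_wf; simp at this; omega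
  · obtain ⟨⟨a1, s1⟩, hp⟩ := p
    have := List.sizeOf_lt_of_mem hp
    simp_wf; simp at this; omega
  · simp_wf

/-- One-step unfolding of a recursive contract: `rec x.σ  ↦  σ[rec x.σ / x]`. -/
def unfold (b : SC) : SC := subst (SC.mu b) b 0

/-- All free de Bruijn indices are `< n`. -/
inductive ClosedAbove : SC → ℕ → Prop where
  | one : ∀ n, ClosedAbove .one n
  | ext : ∀ l n, (∀ p ∈ l, ClosedAbove p.2 n) → ClosedAbove (.ext l) n
  | int : ∀ l n, (∀ p ∈ l, ClosedAbove p.2 n) → ClosedAbove (.int l) n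
  | var : ∀ x n, x < n → ClosedAbove (.var x) n
  | mu : ∀ b n, ClosedAbove b (n + 1) → ClosedAbove (.mu b) n

/-- Structural well-formedness: choices are nonempty with pairwise distinct names,
    and recursion bodies are not variables (contractiveness). -/
inductive WF : SC → Prop where
  | one : WF .one
  | ext : ∀ l, l ≠ [] → (l.map Prod.fst).Nodup → (∀ p ∈ l, WF p.2) → WF (.ext l)
  | int : ∀ l, l ≠ [] → (l.map Prod.fst).Nodup → (∀ p ∈ l, WF p.2) → WF (.int l)
  | var : ∀ x, WF (.var x)
  | mu : ∀ b, (∀ x, b ≠ .var x) → WF b → WF (.mu b)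

/-- τ-transitions of session contracts (with equi-recursive unfolding). -/
inductive Tau : SC → SC → Prop where
  | int : ∀ l p, p ∈ l → Tau (SC.int l) (SC.int [p])
  | unfold : ∀ b σ', Tau b.unfold σ' → Tau (SC.mu b) σ'

/-- Labelled transitions of session contracts (with equi-recursive unfolding). -/
inductive Step : SC → Act → SC → Prop where
  | ext : ∀ l a σ, (a, σ) ∈ l → Step (SC.ext l) (Act.inp a) σ
  | out : ∀ a σ, Step (SC.int [(a, σ)]) (Act.out a) σ
  | unfold : ∀ b α σ', Step b.unfold α σ' → Step (SC.mu b) α σ'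

end SC

/-- `σ` is a session contract: a closed, well-formed raw session contract. -/
def IsContract (σ : SC) : Prop := σ.ClosedAbove 0 ∧ σ.WF

/-- Raw session orchestrators: `one` = 1, `choice l` = μ₁.f₁ ∨ ⋯ ∨ μₙ.fₙ,
    de Bruijn variables and recursion. -/
inductive Orch : Type where
  | one : Orch
  | choice : List (OAct × Orch) → Orch
  | var : ℕ → Orch
  | mu : Orch → Orch

namespace Orch

/-- Simultaneous substitution of the (closed) orchestrators `θ` for the free variables. -/
def msubst : Orch → List Orch → Orch
  | .one, _ => .one
  | .choice l, θ => .choice (l.attach.map fun p => (p.1.1, msubst p.1.2 θ))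
  | .var x, θ => θ.getD x (.var x)
  | .mu b, θ => .mu (msubst b (Orch.var 0 :: θ))
termination_by f _ => sizeOf f
decreasing_by
  · obtain ⟨⟨a1, s1⟩, hp⟩ := p
    have := List.sizeOf_lt_of_mem hp
    simp_wf; simp at this; omega
  · simp_wf

/-- One-step unfolding of a recursive orchestrator. -/
def unfold (b : Orch) : Orch := msubst b [Orch.mu b]

inductive ClosedAbove : Orch → ℕ → Prop where
  | one : ∀ n, ClosedAbove .one n
  | choice : ∀ l n, (∀ p ∈ l, ClosedAbove p.2 n) → ClosedAbove (.choice l) n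
  | var : ∀ x n, x < n → ClosedAbove (.var x) n
  | mu : ∀ b n, ClosedAbove b (n + 1) → ClosedAbove (.mu b) n

/-- Structural well-formedness of orchestrators: every choice is nonempty and either all
    its prefixes are of category ι_L, or all of category ι_R, or it is a single prefix of
    category o; recursion bodies are not variables. -/
inductive WF : Orch → Prop where
  | one : WF .one
  | choice : ∀ l, l ≠ [] →
      ((∀ p ∈ l, OAct.catL p.1) ∨ (∀ p ∈ l, OAct.catR p.1) ∨
        (∃ μ g, OAct.catO μ ∧ l = [(μ, g)])) →
      (∀ p ∈ l, WF p.2) → WF (.choice l)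
  | var : ∀ x, WF (.var x)
  | mu : ∀ b, (∀ x, b ≠ .var x) → WF b → WF (.mu b)

/-- LTS of orchestrators (with equi-recursive unfolding). -/
inductive Step : Orch → OAct → Orch → Prop where
  | pre : ∀ l μ g, (μ, g) ∈ l → Step (Orch.choice l) μ g
  | unfold : ∀ b μ g, Step b.unfold μ g → Step (Orch.mu b) μ g

/-- Finite traces of an orchestrator. -/
inductive Trace : Orch → List OAct → Orch → Prop where
  | nil : ∀ f, Trace f [] f
  | cons : ∀ f μ g ms h, Step f μ g → Trace g ms h → Trace f (μ :: ms) h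

def NoStep (f : Orch) : Prop := ¬ ∃ μ g, Step f μ g

end Orch

/-- `f` is a session orchestrator: closed and well-formed. -/
def IsOrch (f : Orch) : Prop := f.ClosedAbove 0 ∧ f.WF

/-! ### Orchestrated systems ρ ∥_f σ -/

abbrev Conf := SC × Orch × SC

namespace Sys

/-- Internal (τ) steps of an orchestrated system. -/
inductive Tau : Conf → Conf → Prop where
  | client : ∀ ρ ρ' f σ, SC.Tau ρ ρ' → Tau (ρ, f, σ) (ρ', f, σ)
  | server : ∀ ρ f σ σ', SC.Tau σ σ' → Tau (ρ, f, σ) (ρ, f, σ')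

/-- Steps of an orchestrated system, labelled by the orchestration action performed. -/
inductive Step : Conf → OAct → Conf → Prop where
  | syncCS : ∀ ρ ρ' f f' σ σ' a, SC.Step ρ (Act.out a) ρ' → Orch.Step f (OAct.cSync a) f' →
      SC.Step σ (Act.inp a) σ' → Step (ρ, f, σ) (OAct.cSync a) (ρ', f', σ')
  | syncSC : ∀ ρ ρ' f f' σ σ' a, SC.Step ρ (Act.inp a) ρ' → Orch.Step f (OAct.sSync a) f' →
      SC.Step σ (Act.out a) σ' → Step (ρ, f, σ) (OAct.sSync a) (ρ', f', σ')
  | cIn : ∀ ρ ρ' f f' σ a, SC.Step ρ (Act.out a) ρ' → Orch.Step f (OAct.cIn a) f' →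
      Step (ρ, f, σ) (OAct.cIn a) (ρ', f', σ)
  | cOut : ∀ ρ ρ' f f' σ a, SC.Step ρ (Act.inp a) ρ' → Orch.Step f (OAct.cOut a) f' →
      Step (ρ, f, σ) (OAct.cOut a) (ρ', f', σ)
  | sIn : ∀ ρ f f' σ σ' a, Orch.Step f (OAct.sIn a) f' → SC.Step σ (Act.out a) σ' →
      Step (ρ, f, σ) (OAct.sIn a) (ρ, f', σ')
  | sOut : ∀ ρ f f' σ σ' a, Orch.Step f (OAct.sOut a) f' → SC.Step σ (Act.inp a) σ' →
      Step (ρ, f, σ) (OAct.sOut a) (ρ, f', σ')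

/-- Any number of τ-steps. -/
def TauRT : Conf → Conf → Prop := Relation.ReflTransGen Tau

/-- Weak labelled step `⟹^μ`. -/
def WStep (c : Conf) (μ : OAct) (c' : Conf) : Prop :=
  ∃ c₁ c₂, TauRT c c₁ ∧ Step c₁ μ c₂ ∧ TauRT c₂ c'

/-- `Exec c ms c'`: the system performs the finite sequence `ms` of orchestration
    actions (interspersed with τ-steps), i.e. `c ⟹^{ms} c'`. -/
inductive Exec : Conf → List OAct → Conf → Prop where
  | nil : ∀ c c', TauRT c c' → Exec c [] c'
  | cons : ∀ c c₁ c₂ μ ms c', TauRT c c₁ → Step c₁ μ c₂ → Exec c₂ ms c' →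
      Exec c (μ :: ms) c'

/-- Infinite executions along the infinite sequence `s` of orchestration actions. -/
def InfExec (c : Conf) (s : ℕ → OAct) : Prop :=
  ∃ cs : ℕ → Conf, cs 0 = c ∧ ∀ n, WStep (cs n) (s n) (cs (n + 1))

/-- `c ↛`: no τ-step and no labelled step is possible. -/
def Stuck (c : Conf) : Prop := (¬ ∃ c', Tau c c') ∧ (¬ ∃ μ c', Step c μ c')

end Sys

/-- `f` is ρ·σ strict: every finite trace of `f` can be performed by the
    orchestrated system ρ ∥_f σ. -/
def Strict (ρ : SC) (f : Orch) (σ : SC) : Prop :=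
  ∀ ms g, Orch.Trace f ms g → ∃ c', Sys.Exec (ρ, f, σ) ms c'

/-- Disrespectful strict compliance `f : ρ ⊣⊩ᵈˢ σ`. -/
def DSCompliant (f : Orch) (ρ σ : SC) : Prop :=
  Strict ρ f σ ∧
  ∀ ms ρ' f' σ', Sys.Exec (ρ, f, σ) ms (ρ', f', σ') → Sys.Stuck (ρ', f', σ') → ρ' = SC.one

/-! ### Buffers and respectfulness -/

/-- The contribution of one orchestration action to the two buffer counters
    (client-to-server, server-to-client) for the name `a`. -/
def OAct.delta : OAct → Name → ℤ × ℤ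
  | .cIn b, a => (if b = a then 1 else 0, 0)
  | .cOut b, a => (if b = a then -1 else 0, 0)
  | .sIn b, a => (0, if b = a then 1 else 0)
  | .sOut b, a => (0, if b = a then -1 else 0)
  | _, _ => (0, 0)

/-- The state of the (initially empty) buffer for name `a` after the finite sequence
    `ms`: `(client-to-server count, server-to-client count)`. -/
def bufCount (ms : List OAct) (a : Name) : ℤ × ℤ :=
  ((ms.map fun μ => (μ.delta a).1).sum, (ms.map fun μ => (μ.delta a).2).sum)

/-- The actions kept by the left-restriction `μ⃗↾ₐ`: exactly ⟨ε,ā⟩ and ⟨a,ε⟩. -/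
def OAct.keepA (a : Name) (μ : OAct) : Prop := μ = OAct.sOut a ∨ μ = OAct.cIn a

def OAct.isSIn : OAct → Prop
  | .sIn _ => True
  | _ => False

/-- A finite or infinite sequence of orchestration actions. -/
inductive OSeq : Type where
  | fin : List OAct → OSeq
  | inf : (ℕ → OAct) → OSeq

namespace OSeq

/-- The finite prefixes of a sequence. -/
def prefixes : OSeq → Set (List OAct)
  | .fin l => {t | t <+: l}
  | .inf s => {t | ∃ n, t = (List.range n).map s}

/-- Soundness: along every prefix, both buffer counts of every name stay ≥ 0. -/
def Sound (v : OSeq) : Prop :=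
  ∀ t ∈ v.prefixes, ∀ a, 0 ≤ (bufCount t a).1 ∧ 0 ≤ (bufCount t a).2

/-- The left-restriction `μ⃗↾ₐ` is finite. -/
def restrFinite : OSeq → Name → Prop
  | .fin _, _ => True
  | .inf s, a => ∃ N, ∀ n, N ≤ n → ¬ OAct.keepA a (s n)

/-- "After all of μ⃗ the client-to-server count of `a` is 0." -/
def csFinalZero : OSeq → Name → Prop
  | .fin l, a => (bufCount l a).1 = 0
  | .inf s, a => ∃ N, ∀ n, N ≤ n → (bufCount ((List.range n).map s) a).1 = 0

/-- The left-restriction `μ⃗↾ₐ` is definitely-⟨a,ε⟩: from some point on, every element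
    of μ⃗ kept by the restriction is ⟨a,ε⟩. -/
def defCIn : OSeq → Name → Prop
  | .fin _, _ => True
  | .inf s, a => ∃ N, ∀ n, N ≤ n → OAct.keepA a (s n) → s n = OAct.cIn a

/-- Client-respectfulness of a sequence. -/
def ClientRespectful (v : OSeq) : Prop :=
  ∀ a, (v.restrFinite a ∧ v.csFinalZero a) ∨ (¬ v.restrFinite a ∧ ¬ v.defCIn a)

/-- Non-definitely server-inputted sequences. -/
def NonDefSI : OSeq → Prop
  | .fin _ => True
  | .inf s => ¬ ∃ N, ∀ n, N ≤ n → OAct.isSIn (s n)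

/-- Respectful sequences. -/
def Respectful (v : OSeq) : Prop := v.Sound ∧ v.ClientRespectful ∧ v.NonDefSI

end OSeq

/-- Maximal traces of an orchestrator: finite traces ending in an orchestrator without
    transitions, and infinite traces. -/
def Orch.MaxTrace (f : Orch) : OSeq → Prop
  | .fin ms => ∃ g, Orch.Trace f ms g ∧ g.NoStep
  | .inf s => ∃ fs : ℕ → Orch, fs 0 = f ∧ ∀ n, Orch.Step (fs n) (s n) (fs (n + 1))

/-- A respectful orchestrator: all its maximal traces are respectful. -/
def Orch.Respectful (f : Orch) : Prop := ∀ v, f.MaxTrace v → v.Respectful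

/-- Orchestrated session compliance `f : ρ ⊣⊩ σ`. -/
def Compliant (f : Orch) (ρ σ : SC) : Prop :=
  (∀ ms ρ' f' σ', Sys.Exec (ρ, f, σ) ms (ρ', f', σ') → Sys.Stuck (ρ', f', σ') →
      ρ' = SC.one ∧ OSeq.Respectful (.fin ms)) ∧
  (∀ s : ℕ → OAct, Sys.InfExec (ρ, f, σ) s → OSeq.Respectful (.inf s))

/-- `ρ ⊣⊩ σ`: some session orchestrator makes `ρ` compliant with `σ`. -/
def Comply (ρ σ : SC) : Prop := ∃ f, IsOrch f ∧ Compliant f ρ σ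

/-- `ρ ⊣⊩ᵈˢ σ`. -/
def DSComply (ρ σ : SC) : Prop := ∃ f, IsOrch f ∧ DSCompliant f ρ σ
/-! ### The inference system ⊩ for orchestrated (disrespectful strict) compliance.
    Contexts are lists of pairs of session contracts, the de Bruijn index `i` referring
    to the `i`-th entry; going under a `rec`-binder pushes a new entry in front. -/

abbrev Ctx := List (SC × SC)

/-- An assumption set: distinct variables are assigned distinct pairs (injectivity),
    and all assumptions are about session contracts. -/
def GoodCtx (Γ : Ctx) : Prop :=
  Γ.Nodup ∧ ∀ p ∈ Γ, IsContract p.1 ∧ IsContract p.2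

/-- The inference system `Γ ⊩ f : ρ ⊣⊩ᵈˢ σ`. -/
inductive Judg : Ctx → Orch → SC → SC → Prop where
  | ax : ∀ Γ σ, Judg Γ .one .one σ
  | hyp : ∀ Γ x ρ σ, Γ[x]? = some (ρ, σ) → Judg Γ (.var x) ρ σ
  | sumL : ∀ Γ l σ a ρp f', (a, ρp) ∈ l →
      Judg ((SC.ext l, σ) :: Γ) f' ρp σ →
      Judg Γ (.mu (.choice [(OAct.cOut a, f')])) (SC.ext l) σ
  | sumR : ∀ Γ ρ l a σp f', (a, σp) ∈ l →
      Judg ((ρ, SC.ext l) :: Γ) f' ρ σp →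
      Judg Γ (.mu (.choice [(OAct.sOut a, f')])) ρ (SC.ext l)
  | ooa : ∀ Γ lI lJ (F : Name × SC → Orch),
      (∀ p ∈ lJ, Judg ((SC.int lI, SC.int lJ) :: Γ) (F p) (SC.int lI) p.2) →
      Judg Γ (.mu (.choice (lJ.map fun p => (OAct.sIn p.1, F p)))) (SC.int lI) (SC.int lJ)
  | oob : ∀ Γ lI lJ (F : Name × SC → Orch),
      (∀ p ∈ lI, Judg ((SC.int lI, SC.int lJ) :: Γ) (F p) p.2 (SC.int lJ)) →
      Judg Γ (.mu (.choice (lI.map fun p => (OAct.cIn p.1, F p)))) (SC.int lI) (SC.int lJ)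
  | osum : ∀ Γ lI lJ (lH lK : List (Name × SC)) (FH FK : Name × SC → Orch) (G : Name × SC → SC),
      (∀ p, p ∈ lI ↔ p ∈ lH ∨ p ∈ lK) →
      (∀ p ∈ lK, (p.1, G p) ∈ lJ) →
      (∀ p ∈ lH, Judg ((SC.int lI, SC.ext lJ) :: Γ) (FH p) p.2 (SC.ext lJ)) →
      (∀ p ∈ lK, Judg ((SC.int lI, SC.ext lJ) :: Γ) (FK p) p.2 (G p)) →
      Judg Γ (.mu (.choice ((lH.map fun p => (OAct.cIn p.1, FH p)) ++
          (lK.map fun p => (OAct.cSync p.1, FK p)))))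
        (SC.int lI) (SC.ext lJ)
  | sumO : ∀ Γ lI lJ (lH lK : List (Name × SC)) (FH FK : Name × SC → Orch) (G : Name × SC → SC),
      (∀ p, p ∈ lJ ↔ p ∈ lH ∨ p ∈ lK) →
      (∀ p ∈ lK, (p.1, G p) ∈ lI) →
      (∀ p ∈ lH, Judg ((SC.ext lI, SC.int lJ) :: Γ) (FH p) (SC.ext lI) p.2) →
      (∀ p ∈ lK, Judg ((SC.ext lI, SC.int lJ) :: Γ) (FK p) (G p) p.2) →
      Judg Γ (.mu (.choice ((lH.map fun p => (OAct.sIn p.1, FH p)) ++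
          (lK.map fun p => (OAct.sSync p.1, FK p)))))
        (SC.ext lI) (SC.int lJ)

/-- `θ ⊨ Γ`: the substitution `θ` assigns to each assumption of `Γ` a session
    orchestrator satisfying it. -/
def CtxSat (θ : List Orch) (Γ : Ctx) : Prop :=
  θ.length = Γ.length ∧
  ∀ i, i < Γ.length →
    IsOrch (θ.getD i .one) ∧
    DSCompliant (θ.getD i .one) (Γ.getD i (SC.one, SC.one)).1 (Γ.getD i (SC.one, SC.one)).2

/-- `Γ ⊨ f : ρ ⊣⊩ᵈˢ σ`. -/
def Models (Γ : Ctx) (f : Orch) (ρ σ : SC) : Prop :=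
  ∀ θ, CtxSat θ Γ → DSCompliant (f.msubst θ) ρ σ
/-! ### The synthesis algorithm `Synth`, implemented as a fuelled function.
    `SynthF fuel Γ ρ σ = none` means that `fuel` was not sufficient to complete the
    computation; `some F` means the computation terminated with result `F`. -/

mutual
/-- Boolean (syntactic) equality of raw session contracts. -/
def SC.beq : SC → SC → Bool
  | .one, .one => true
  | .ext l, .ext m => SC.beqL l m
  | .int l, .int m => SC.beqL l m
  | .var x, .var y => x == y
  | .mu s, .mu t => SC.beq s t
  | _, _ => false
def SC.beqL : List (Name × SC) → List (Name × SC) → Bool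
  | [], [] => true
  | (a, s) :: l, (b, t) :: m => a == b && SC.beq s t && SC.beqL l m
  | _, _ => false
end

def pairBeq (p q : SC × SC) : Bool := SC.beq p.1 q.1 && SC.beq p.2 q.2

def brBeq (p q : Name × SC) : Bool := p.1 == q.1 && SC.beq p.2 q.2

/-- The position of the assumption `ρ ⊣⊩ᵈˢ σ` in `Γ`, if any. -/
def ctxIndex (Γ : Ctx) (ρ σ : SC) : Option ℕ :=
  Γ.findIdx? (fun p => pairBeq p (ρ, σ))

/-- `optMapM f l`: monadic map over `Option`. -/
def optMapM (f : α → Option β) : List α → Option (List β)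
  | [] => some []
  | x :: xs => do
      let y ← f x
      let ys ← optMapM f xs
      pure (y :: ys)

/-- All ways of selecting one element from each list. -/
def selections : List (List α) → List (List α)
  | [] => [[]]
  | l :: ls => l.flatMap fun x => (selections ls).map fun r => x :: r

/-- The fuelled synthesis algorithm. -/
def SynthF : ℕ → Ctx → SC → SC → Option (List Orch)
  | 0, _, _, _ => none
  | fuel + 1, Γ, ρ, σ =>
    match ctxIndex Γ ρ σ with
    | some i => some [Orch.var i]
    | none =>
      match ρ, σ with
      | SC.one, _ => some [Orch.one]
      | SC.mu b, σ => SynthF fuel Γ b.unfold σ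
      | ρ, SC.mu b => SynthF fuel Γ ρ b.unfold
      | SC.ext lI, SC.ext lJ => do
          let Γ' := (SC.ext lI, SC.ext lJ) :: Γ
          let rs1 ← optMapM (fun p => do
              let fs ← SynthF fuel Γ' p.2 (SC.ext lJ)
              pure (fs.map fun f => Orch.mu (.choice [(OAct.cOut p.1, f)]))) lI
          let rs2 ← optMapM (fun p => do
              let fs ← SynthF fuel Γ' (SC.ext lI) p.2
              pure (fs.map fun f => Orch.mu (.choice [(OAct.sOut p.1, f)]))) lJ
          pure (rs1.flatten ++ rs2.flatten)
      | SC.int lI, SC.int lJ => do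
          let Γ' := (SC.int lI, SC.int lJ) :: Γ
          let fssI ← optMapM (fun p => SynthF fuel Γ' p.2 (SC.int lJ)) lI
          let fssJ ← optMapM (fun p => SynthF fuel Γ' (SC.int lI) p.2) lJ
          pure ((selections fssI).map (fun sel =>
                  Orch.mu (.choice (List.zipWith (fun p f => (OAct.cIn p.1, f)) lI sel)))
             ++ (selections fssJ).map (fun sel =>
                  Orch.mu (.choice (List.zipWith (fun p f => (OAct.sIn p.1, f)) lJ sel))))
      | SC.int lI, SC.ext lJ => do
          let Γ' := (SC.int lI, SC.ext lJ) :: Γ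
          let splits := lI.sublists.flatMap fun lH => lI.sublists.filterMap fun lK =>
              if (lI.all fun p => lH.any (brBeq p) || lK.any (brBeq p)) &&
                 (lK.all fun p => lJ.any fun q => q.1 == p.1)
              then some (lH, lK) else none
          let rsSplit ← optMapM (fun hk : List (Name × SC) × List (Name × SC) => do
              let fssH ← optMapM (fun p => SynthF fuel Γ' p.2 (SC.ext lJ)) hk.1
              let fssK ← optMapM (fun p => do
                  let σk ← List.lookup p.1 lJ
                  SynthF fuel Γ' p.2 σk) hk.2
              pure ((selections fssH).flatMap fun selH =>
                    (selections fssK).map fun selK =>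
                      Orch.mu (.choice (List.zipWith (fun p f => (OAct.cIn p.1, f)) hk.1 selH
                        ++ List.zipWith (fun p f => (OAct.cSync p.1, f)) hk.2 selK)))) splits
          let rs2 ← optMapM (fun p => do
              let fs ← SynthF fuel Γ' (SC.int lI) p.2
              pure (fs.map fun f => Orch.mu (.choice [(OAct.sOut p.1, f)]))) lJ
          pure (rsSplit.flatten ++ rs2.flatten)
      | SC.ext lI, SC.int lJ => do
          let Γ' := (SC.ext lI, SC.int lJ) :: Γ
          let splits := lJ.sublists.flatMap fun lH => lJ.sublists.filterMap fun lK =>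
              if (lJ.all fun p => lH.any (brBeq p) || lK.any (brBeq p)) &&
                 (lK.all fun p => lI.any fun q => q.1 == p.1)
              then some (lH, lK) else none
          let rsSplit ← optMapM (fun hk : List (Name × SC) × List (Name × SC) => do
              let fssH ← optMapM (fun p => SynthF fuel Γ' (SC.ext lI) p.2) hk.1
              let fssK ← optMapM (fun p => do
                  let ρk ← List.lookup p.1 lI
                  SynthF fuel Γ' ρk p.2) hk.2
              pure ((selections fssH).flatMap fun selH =>
                    (selections fssK).map fun selK =>
                      Orch.mu (.choice (List.zipWith (fun p f => (OAct.sIn p.1, f)) hk.1 selH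
                        ++ List.zipWith (fun p f => (OAct.sSync p.1, f)) hk.2 selK)))) splits
          let rs1 ← optMapM (fun p => do
              let fs ← SynthF fuel Γ' p.2 (SC.int lJ)
              pure (fs.map fun f => Orch.mu (.choice [(OAct.cOut p.1, f)]))) lI
          pure (rsSplit.flatten ++ rs1.flatten)
      | _, _ => some []

/-- `f ∈ Synth(Γ, ρ, σ)`. -/
def SynthMem (f : Orch) (Γ : Ctx) (ρ σ : SC) : Prop :=
  ∃ fuel F, SynthF fuel Γ ρ σ = some F ∧ f ∈ F
/-! ### Auxiliary development -/

namespace SC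

theorem sizeOf_snd_lt {p : Name × SC} {l : List (Name × SC)} (hp : p ∈ l) :
    sizeOf p.2 < sizeOf l := by
  have := List.sizeOf_lt_of_mem hp
  obtain ⟨a, s⟩ := p
  simp at this ⊢
  omega


theorem sizeOf_snd_lt_ext {p : Name × SC} {l : List (Name × SC)} (hp : p ∈ l) :
    sizeOf p.2 < sizeOf (SC.ext l) :=
  lt_trans (sizeOf_snd_lt hp) (by simp)

theorem sizeOf_snd_lt_int {p : Name × SC} {l : List (Name × SC)} (hp : p ∈ l) :
    sizeOf p.2 < sizeOf (SC.int l) :=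
  lt_trans (sizeOf_snd_lt hp) (by simp)

/-- Strong induction on size. -/
theorem size_ind {P : SC → Prop} (h : ∀ s, (∀ t, sizeOf t < sizeOf s → P t) → P s) :
    ∀ s, P s := fun s =>
  (Nat.strong_induction_on (p := fun n => ∀ s, sizeOf s = n → P s) (sizeOf s)
    (fun _ ih s hs => h s (fun t ht => ih (sizeOf t) (hs ▸ ht) t rfl))) s rfl

@[simp] theorem subst_one (u : SC) (k : ℕ) : subst u .one k = .one := by rw [subst]
@[simp] theorem subst_var (u : SC) (x k : ℕ) :
    subst u (.var x) k = if x = k then u else .var x := by rw [subst]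
@[simp] theorem subst_mu (u b : SC) (k : ℕ) :
    subst u (.mu b) k = .mu (subst u b (k+1)) := by rw [subst]
@[simp] theorem subst_ext (u : SC) (l : List (Name × SC)) (k : ℕ) :
    subst u (.ext l) k = .ext (l.map fun p => (p.1, subst u p.2 k)) := by
  rw [subst]; congr 1; rw [List.map_attach_eq_pmap]; simp [List.pmap_eq_map]
@[simp] theorem subst_int (u : SC) (l : List (Name × SC)) (k : ℕ) :
    subst u (.int l) k = .int (l.map fun p => (p.1, subst u p.2 k)) := by
  rw [subst]; congr 1; rw [List.map_attach_eq_pmap]; simp [List.pmap_eq_map]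

theorem beq_refl : ∀ s : SC, SC.beq s s = true := by
  intro s
  induction s using size_ind with
  | h s ih =>
    cases s with
    | one => simp [SC.beq]
    | var x => simp [SC.beq]
    | mu b => exact ih b (by simp)
    | ext l =>
        show SC.beqL l l = true
        induction l with
        | nil => simp [SC.beqL]
        | cons p t iht =>
            obtain ⟨a, s⟩ := p
            simp only [SC.beqL, Bool.and_eq_true, beq_self_eq_true, true_and]
            constructor
            · exact ih s (by simp; omega)
            · exact iht (fun t' ht' => ih t' (by simp at ht' ⊢; omega))
    | int l =>
        show SC.beqL l l = true
        induction l with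
        | nil => simp [SC.beqL]
        | cons p t iht =>
            obtain ⟨a, s⟩ := p
            simp only [SC.beqL, Bool.and_eq_true, beq_self_eq_true, true_and]
            constructor
            · exact ih s (by simp; omega)
            · exact iht (fun t' ht' => ih t' (by simp at ht' ⊢; omega))

end SC
namespace SC

/-- Parallel substitution of closed terms for free variables, with offset `k`. -/
def aenv : SC → ℕ → List SC → SC
  | .one, _, _ => .one
  | .ext l, k, env => .ext (l.attach.map fun p => (p.1.1, aenv p.1.2 k env))
  | .int l, k, env => .int (l.attach.map fun p => (p.1.1, aenv p.1.2 k env))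
  | .var x, k, env => if x < k then .var x else env.getD (x - k) (.var x)
  | .mu b, k, env => .mu (aenv b (k + 1) env)
termination_by s _ _ => sizeOf s
decreasing_by
  · exact sizeOf_snd_lt_ext p.2
  · exact sizeOf_snd_lt_int p.2
  · simp

@[simp] theorem aenv_one (k : ℕ) (env : List SC) : aenv .one k env = .one := by rw [aenv]
@[simp] theorem aenv_var (x k : ℕ) (env : List SC) :
    aenv (.var x) k env = if x < k then .var x else env.getD (x - k) (.var x) := by rw [aenv]
@[simp] theorem aenv_mu (b : SC) (k : ℕ) (env : List SC) :
    aenv (.mu b) k env = .mu (aenv b (k + 1) env) := by rw [aenv]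
@[simp] theorem aenv_ext (l : List (Name × SC)) (k : ℕ) (env : List SC) :
    aenv (.ext l) k env = .ext (l.map fun p => (p.1, aenv p.2 k env)) := by
  rw [aenv]; congr 1; rw [List.map_attach_eq_pmap]; simp [List.pmap_eq_map]
@[simp] theorem aenv_int (l : List (Name × SC)) (k : ℕ) (env : List SC) :
    aenv (.int l) k env = .int (l.map fun p => (p.1, aenv p.2 k env)) := by
  rw [aenv]; congr 1; rw [List.map_attach_eq_pmap]; simp [List.pmap_eq_map]

theorem aenv_nil : ∀ (s : SC) (k : ℕ), aenv s k [] = s := by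
  intro s
  induction s using size_ind with
  | h s ih =>
    intro k
    cases s with
    | one => simp
    | var x => simp
    | mu b => simp [ih b (by simp)]
    | ext l =>
        simp only [aenv_ext, ext.injEq]
        conv_rhs => rw [← List.map_id l]
        exact List.map_congr_left fun p hp => by
          rw [ih p.2 (sizeOf_snd_lt_ext hp) k]; rfl
    | int l =>
        simp only [aenv_int, int.injEq]
        conv_rhs => rw [← List.map_id l]
        exact List.map_congr_left fun p hp => by
          rw [ih p.2 (sizeOf_snd_lt_int hp) k]; rfl

theorem closedAbove_mono {s : SC} {m n : ℕ} (h : ClosedAbove s m) (hmn : m ≤ n) :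
    ClosedAbove s n := by
  induction h generalizing n with
  | one => exact .one _
  | ext l m _ ih => exact .ext _ _ fun p hp => ih p hp hmn
  | int l m _ ih => exact .int _ _ fun p hp => ih p hp hmn
  | var x m hx => exact .var _ _ (by omega)
  | mu b m _ ih => exact .mu _ _ (ih (by omega))

theorem subst_closed_id {e : SC} {m : ℕ} (h : ClosedAbove e m) :
    ∀ u k, m ≤ k → subst u e k = e := by
  induction h with
  | one => simp
  | ext l m _ ih =>
      intro u k hk
      simp only [subst_ext, ext.injEq]
      conv_rhs => rw [← List.map_id l]
      exact List.map_congr_left fun p hp => by rw [ih p hp u k hk]; rfl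
  | int l m _ ih =>
      intro u k hk
      simp only [subst_int, int.injEq]
      conv_rhs => rw [← List.map_id l]
      exact List.map_congr_left fun p hp => by rw [ih p hp u k hk]; rfl
  | var x m hx => intro u k hk; simp; omega
  | mu b m _ ih => intro u k hk; simp [ih u (k+1) (by omega)]

/-- Commutation: substituting into an `aenv`-image extends the environment. -/
theorem subst_aenv (u : SC) {env : List SC} (henv : ∀ e ∈ env, ClosedAbove e 0) :
    ∀ (b : SC) (k : ℕ), subst u (aenv b (k+1) env) k = aenv b k (u :: env) := by
  intro b
  induction b using size_ind with
  | h b ih =>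
    intro k
    cases b with
    | one => simp
    | mu c => simp [ih c (by simp) (k+1)]
    | ext l =>
        simp only [aenv_ext, subst_ext, List.map_map, ext.injEq]
        exact List.map_congr_left fun p hp => by
          simp [ih p.2 (sizeOf_snd_lt_ext hp) k]
    | int l =>
        simp only [aenv_int, subst_int, List.map_map, int.injEq]
        exact List.map_congr_left fun p hp => by
          simp [ih p.2 (sizeOf_snd_lt_int hp) k]
    | var x =>
        rcases lt_trichotomy x k with hx | hx | hx
        · simp [hx, Nat.lt_succ_of_lt hx, Nat.ne_of_lt hx]
        · subst hx
          simp [Nat.lt_succ_self]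
        · have h1 : ¬ x < k + 1 := by omega
          have h2 : ¬ x < k := by omega
          have h3 : x ≠ k := by omega
          have hxk : x - k = (x - (k+1)) + 1 := by omega
          simp only [aenv_var, h1, if_false, h2, hxk, List.getD_cons_succ]
          by_cases hlen : x - (k+1) < env.length
          · rw [List.getD_eq_getElem _ _ hlen]
            exact subst_closed_id (henv _ (List.getElem_mem hlen)) u k (Nat.zero_le k)
          · rw [List.getD_eq_default _ _ (by omega)]
            simp [h3]

end SC
namespace SC

theorem aenv_closed {env : List SC} (henv : ∀ e ∈ env, ClosedAbove e 0) :
    ∀ (s : SC) (k : ℕ), ClosedAbove s (k + env.length) → ClosedAbove (aenv s k env) k := by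
  intro s
  induction s using size_ind with
  | h s ih =>
    intro k hs
    cases s with
    | one => rw [aenv_one]; exact .one _
    | mu b =>
        cases hs with
        | mu _ _ hb =>
          simp only [aenv_mu]
          exact .mu _ _ (ih b (by simp) (k+1) (by
            have : k + env.length + 1 = k + 1 + env.length := by omega
            rw [← this]; exact hb))
    | ext l =>
        cases hs with
        | ext _ _ hl =>
          simp only [aenv_ext]
          exact .ext _ _ fun q hq => by
            obtain ⟨p, hp, rfl⟩ := List.mem_map.1 hq
            exact ih p.2 (sizeOf_snd_lt_ext hp) k (hl p hp)
    | int l =>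
        cases hs with
        | int _ _ hl =>
          simp only [aenv_int]
          exact .int _ _ fun q hq => by
            obtain ⟨p, hp, rfl⟩ := List.mem_map.1 hq
            exact ih p.2 (sizeOf_snd_lt_int hp) k (hl p hp)
    | var x =>
        cases hs with
        | var _ _ hx =>
          simp only [aenv_var]
          by_cases hk : x < k
          · simp only [hk, if_true]; exact .var _ _ hk
          · simp only [hk, if_false]
            have hlen : x - k < env.length := by omega
            rw [List.getD_eq_getElem _ _ hlen]
            exact closedAbove_mono (henv _ (List.getElem_mem hlen)) (Nat.zero_le k)

/-- A term is not a variable. -/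
def NotVar : SC → Prop
  | .var _ => False
  | _ => True

theorem notVar_iff {s : SC} : NotVar s ↔ ∀ x, s ≠ .var x := by
  cases s <;> simp [NotVar]

theorem aenv_notVar {s : SC} (hs : NotVar s) (k : ℕ) (env : List SC) :
    NotVar (aenv s k env) := by
  cases s <;> simp [NotVar] at hs ⊢

theorem aenv_wf {env : List SC} (henv : ∀ e ∈ env, WF e ∧ ∃ b, e = .mu b) :
    ∀ (s : SC), WF s → ∀ k, WF (aenv s k env) := by
  intro s
  induction s using size_ind with
  | h s ih =>
    intro hs k
    cases s with
    | one => rw [aenv_one]; exact .one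
    | var x =>
        simp only [aenv_var]
        by_cases hk : x < k
        · simp [hk]; exact .var x
        · simp only [hk, if_false]
          by_cases hlen : x - k < env.length
          · rw [List.getD_eq_getElem _ _ hlen]
            exact (henv _ (List.getElem_mem hlen)).1
          · rw [List.getD_eq_default _ _ (by omega)]; exact .var x
    | mu b =>
        cases hs with
        | mu _ hnv hb =>
          simp only [aenv_mu]
          refine .mu _ (fun x => ?_) (ih b (by simp) hb (k+1))
          have : NotVar b := notVar_iff.2 hnv
          have := aenv_notVar this (k+1) env
          intro he; rw [he] at this; exact this.elim
    | ext l =>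
        cases hs with
        | ext _ hne hnd hl =>
          simp only [aenv_ext]
          refine .ext _ (by simpa using hne) ?_ ?_
          · rw [List.map_map]
            have : (Prod.fst ∘ fun p : Name × SC => (p.1, aenv p.2 k env)) = Prod.fst := rfl
            rw [this]; exact hnd
          · intro q hq
            obtain ⟨p, hp, rfl⟩ := List.mem_map.1 hq
            exact ih p.2 (sizeOf_snd_lt_ext hp) (hl p hp) k
    | int l =>
        cases hs with
        | int _ hne hnd hl =>
          simp only [aenv_int]
          refine .int _ (by simpa using hne) ?_ ?_
          · rw [List.map_map]
            have : (Prod.fst ∘ fun p : Name × SC => (p.1, aenv p.2 k env)) = Prod.fst := rfl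
            rw [this]; exact hnd
          · intro q hq
            obtain ⟨p, hp, rfl⟩ := List.mem_map.1 hq
            exact ih p.2 (sizeOf_snd_lt_int hp) (hl p hp) k

/-- One-step derivatives of (equi-recursive) session contracts. -/
inductive Dstep : SC → SC → Prop where
  | mu : ∀ b, Dstep (.mu b) b.unfold
  | ext : ∀ l p, p ∈ l → Dstep (.ext l) p.2
  | int : ∀ l p, p ∈ l → Dstep (.int l) p.2

/-- Leading-μ depth. -/
def muD : SC → ℕ
  | .mu b => muD b + 1
  | _ => 0

theorem attach_flatMap {α β : Type _} (l : List α) (g : α → List β) :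
    l.attach.flatMap (fun p => g p.1) = l.flatMap g := by
  rw [List.flatMap, List.flatMap, List.map_attach_eq_pmap]
  simp [List.pmap_eq_map]

theorem muD_subst : ∀ {b : SC}, WF b → NotVar b → ∀ (u : SC) (k : ℕ),
    muD (subst u b k) = muD b := by
  intro b
  induction b using size_ind with
  | h b ih =>
    intro hb hnv u k
    cases b with
    | one => simp [muD]
    | ext l => simp [muD]
    | int l => simp [muD]
    | var x => exact hnv.elim
    | mu c =>
        cases hb with
        | mu _ hnv' hc =>
          simp only [subst_mu, muD]
          rw [ih c (by simp) hc (notVar_iff.2 hnv') u (k+1)]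

theorem muD_unfold {b : SC} (h : WF (.mu b)) : muD b.unfold = muD b := by
  cases h with
  | mu _ hnv hb => exact muD_subst hb (notVar_iff.2 hnv) _ _

/-- All potential derivatives of `s`, in environment `env`. -/
def cand : SC → List SC → List SC
  | .one, _ => [.one]
  | .var x, env => [env.getD x (.var x)]
  | .ext l, env => aenv (.ext l) 0 env :: (l.attach.flatMap fun p => cand p.1.2 env)
  | .int l, env => aenv (.int l) 0 env :: (l.attach.flatMap fun p => cand p.1.2 env)
  | .mu b, env => aenv (.mu b) 0 env :: cand b (aenv (.mu b) 0 env :: env)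
termination_by s _ => sizeOf s
decreasing_by
  · exact sizeOf_snd_lt_ext p.2
  · exact sizeOf_snd_lt_int p.2
  · simp

@[simp] theorem cand_one (env : List SC) : cand .one env = [.one] := by rw [cand]
@[simp] theorem cand_var (x : ℕ) (env : List SC) :
    cand (.var x) env = [env.getD x (.var x)] := by rw [cand]
@[simp] theorem cand_mu (b : SC) (env : List SC) :
    cand (.mu b) env = aenv (.mu b) 0 env :: cand b (aenv (.mu b) 0 env :: env) := by rw [cand]
theorem cand_ext (l : List (Name × SC)) (env : List SC) :
    cand (.ext l) env = aenv (.ext l) 0 env :: (l.flatMap fun p => cand p.2 env) := by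
  rw [cand]; congr 1
  exact attach_flatMap l fun p => cand p.2 env
theorem cand_int (l : List (Name × SC)) (env : List SC) :
    cand (.int l) env = aenv (.int l) 0 env :: (l.flatMap fun p => cand p.2 env) := by
  rw [cand]; congr 1
  exact attach_flatMap l fun p => cand p.2 env

end SC
namespace SC

theorem aenv_mem_cand : ∀ (s : SC) (env : List SC), aenv s 0 env ∈ cand s env := by
  intro s env
  cases s with
  | one => simp
  | var x => simp
  | mu b => simp
  | ext l => rw [cand_ext]; exact List.mem_cons_self
  | int l => rw [cand_int]; exact List.mem_cons_self

def DClosed (T : List SC) : Prop := ∀ t ∈ T, ∀ t', Dstep t t' → t' ∈ T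

theorem cand_closed {T : List SC} :
    ∀ (s : SC) (env : List SC),
      (∀ e ∈ env, ClosedAbove e 0) →
      (∀ e ∈ env, ∀ t', Dstep e t' → t' ∈ T) →
      ClosedAbove s env.length →
      (∀ u ∈ cand s env, u ∈ T) →
      ∀ t ∈ cand s env, ∀ t', Dstep t t' → t' ∈ T := by
  intro s
  induction s using size_ind with
  | h s ih =>
    intro env hcl hder hs hsub t ht t' hd
    cases s with
    | one =>
        simp only [cand_one, List.mem_singleton] at ht
        subst ht; cases hd
    | var x =>
        simp only [cand_var, List.mem_singleton] at ht
        subst ht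
        by_cases hlen : x < env.length
        · rw [List.getD_eq_getElem _ _ (by simpa using hlen)] at hd
          exact hder _ (List.getElem_mem (by simpa using hlen)) t' hd
        · rw [List.getD_eq_default _ _ (by omega)] at hd
          cases hd
    | ext l =>
        rw [cand_ext] at ht
        rcases List.mem_cons.1 ht with rfl | ht
        · rw [aenv_ext] at hd
          cases hd with
          | ext _ q hq =>
              obtain ⟨p, hp, rfl⟩ := List.mem_map.1 hq
              refine hsub _ ?_
              rw [cand_ext]
              refine List.mem_cons_of_mem _ (List.mem_flatMap.2 ⟨p, hp, ?_⟩)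
              exact aenv_mem_cand p.2 env
        · obtain ⟨p, hp, htp⟩ := List.mem_flatMap.1 ht
          cases hs with
          | ext _ _ hl =>
            refine ih p.2 (sizeOf_snd_lt_ext hp) env hcl hder (hl p hp) ?_ t htp t' hd
            intro u hu
            refine hsub _ ?_
            rw [cand_ext]
            exact List.mem_cons_of_mem _ (List.mem_flatMap.2 ⟨p, hp, hu⟩)
    | int l =>
        rw [cand_int] at ht
        rcases List.mem_cons.1 ht with rfl | ht
        · rw [aenv_int] at hd
          cases hd with
          | int _ q hq =>
              obtain ⟨p, hp, rfl⟩ := List.mem_map.1 hq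
              refine hsub _ ?_
              rw [cand_int]
              refine List.mem_cons_of_mem _ (List.mem_flatMap.2 ⟨p, hp, ?_⟩)
              exact aenv_mem_cand p.2 env
        · obtain ⟨p, hp, htp⟩ := List.mem_flatMap.1 ht
          cases hs with
          | int _ _ hl =>
            refine ih p.2 (sizeOf_snd_lt_int hp) env hcl hder (hl p hp) ?_ t htp t' hd
            intro u hu
            refine hsub _ ?_
            rw [cand_int]
            exact List.mem_cons_of_mem _ (List.mem_flatMap.2 ⟨p, hp, hu⟩)
    | mu b =>
        have hu0cl : ClosedAbove (aenv (.mu b) 0 env) 0 :=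
          aenv_closed hcl (.mu b) 0 (by simpa using hs)
        have hb1 : ClosedAbove b (env.length + 1) := by cases hs with | mu _ _ h => exact h
        have hu0der : ∀ t', Dstep (aenv (.mu b) 0 env) t' → t' ∈ T := by
          intro t' hd'
          rw [aenv_mu] at hd'
          cases hd' with
          | mu _ =>
              have : (aenv b (0+1) env).unfold = aenv b 0 (aenv (.mu b) 0 env :: env) := by
                rw [unfold, ← aenv_mu]
                exact subst_aenv _ hcl b 0
              rw [show (0:ℕ)+1 = 1 from rfl] at this
              rw [this]
              refine hsub _ ?_
              rw [cand_mu]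
              exact List.mem_cons_of_mem _ (aenv_mem_cand b _)
        rw [cand_mu] at ht
        rcases List.mem_cons.1 ht with rfl | ht
        · exact hu0der t' hd
        · refine ih b (by simp) (aenv (.mu b) 0 env :: env) ?_ ?_ ?_ ?_ t ht t' hd
          · intro e he
            rcases List.mem_cons.1 he with rfl | he
            · exact hu0cl
            · exact hcl e he
          · intro e he
            rcases List.mem_cons.1 he with rfl | he
            · exact hu0der
            · exact hder e he
          · simpa using hb1
          · intro u hu
            refine hsub _ ?_
            rw [cand_mu]
            exact List.mem_cons_of_mem _ hu

theorem cand_wf :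
    ∀ (s : SC) (env : List SC), WF s → (∀ e ∈ env, WF e ∧ ∃ b, e = .mu b) →
      ∀ t ∈ cand s env, WF t := by
  intro s
  induction s using size_ind with
  | h s ih =>
    intro env hs henv t ht
    cases s with
    | one =>
        simp only [cand_one, List.mem_singleton] at ht; subst ht; exact .one
    | var x =>
        simp only [cand_var, List.mem_singleton] at ht; subst ht
        by_cases hlen : x < env.length
        · rw [List.getD_eq_getElem _ _ (by simpa using hlen)]
          exact (henv _ (List.getElem_mem (by simpa using hlen))).1
        · rw [List.getD_eq_default _ _ (by omega)]; exact .var x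
    | ext l =>
        rw [cand_ext] at ht
        rcases List.mem_cons.1 ht with rfl | ht
        · exact aenv_wf (fun e he => henv e he) (.ext l) hs 0
        · obtain ⟨p, hp, htp⟩ := List.mem_flatMap.1 ht
          cases hs with
          | ext _ _ _ hl => exact ih p.2 (sizeOf_snd_lt_ext hp) env (hl p hp) henv t htp
    | int l =>
        rw [cand_int] at ht
        rcases List.mem_cons.1 ht with rfl | ht
        · exact aenv_wf (fun e he => henv e he) (.int l) hs 0
        · obtain ⟨p, hp, htp⟩ := List.mem_flatMap.1 ht
          cases hs with
          | int _ _ _ hl => exact ih p.2 (sizeOf_snd_lt_int hp) env (hl p hp) henv t htp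
    | mu b =>
        have hu0wf : WF (aenv (.mu b) 0 env) :=
          aenv_wf (fun e he => henv e he) (.mu b) hs 0
        rw [cand_mu] at ht
        rcases List.mem_cons.1 ht with rfl | ht
        · exact hu0wf
        · cases hs with
          | mu _ hnv hb =>
            refine ih b (by simp) _ hb ?_ t ht
            intro e he
            rcases List.mem_cons.1 he with rfl | he
            · exact ⟨hu0wf, aenv b 1 env, by rw [aenv_mu]⟩
            · exact henv e he

/-- For a session contract, `cand ρ []` contains `ρ`, is closed under derivatives,
    and consists of well-formed terms. -/
theorem cand_spec {ρ : SC} (h : IsContract ρ) :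
    ρ ∈ cand ρ [] ∧ DClosed (cand ρ []) ∧ ∀ t ∈ cand ρ [], WF t := by
  obtain ⟨hcl, hwf⟩ := h
  refine ⟨?_, ?_, ?_⟩
  · have := aenv_mem_cand ρ []
    rwa [aenv_nil] at this
  · intro t ht t' hd
    exact cand_closed ρ [] (by simp) (by simp) (by simpa using hcl) (fun u hu => hu) t ht t' hd
  · exact cand_wf ρ [] hwf (by simp)

end SC
theorem optMapM_mono {α β : Type _} {f g : α → Option β} :
    ∀ {l : List α}, (∀ x ∈ l, ∀ y, f x = some y → g x = some y) →
      ∀ {ys}, optMapM f l = some ys → optMapM g l = some ys := by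
  intro l
  induction l with
  | nil => intro _ ys h; simpa [optMapM] using h
  | cons a t ih =>
      intro h ys hy
      rw [optMapM] at hy ⊢
      cases hfa : f a with
      | none => rw [hfa] at hy; simp at hy
      | some y =>
          rw [hfa] at hy
          cases hft : optMapM f t with
          | none => rw [hft] at hy; simp at hy
          | some ys' =>
              rw [hft] at hy
              simp at hy
              rw [h a (by simp) y hfa, ih (fun x hx => h x (by simp [hx])) hft]
              simp [hy]

theorem optMapM_isSome {α β : Type _} {f : α → Option β} :
    ∀ {l : List α}, (∀ x ∈ l, (f x).isSome) → (optMapM f l).isSome := by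
  intro l
  induction l with
  | nil => intro _; simp [optMapM]
  | cons a t ih =>
      intro h
      obtain ⟨y, hy⟩ := Option.isSome_iff_exists.1 (h a (by simp))
      obtain ⟨ys, hys⟩ := Option.isSome_iff_exists.1 (ih (fun x hx => h x (by simp [hx])))
      simp [optMapM, hy, hys]

theorem bind_mono {α β : Type _} {a b : Option α} {k k' : α → Option β}
    (hab : ∀ x, a = some x → b = some x) (hk : ∀ x y, k x = some y → k' x = some y) :
    ∀ z, a.bind k = some z → b.bind k' = some z := by
  intro z h
  obtain ⟨x, hx, hkx⟩ := Option.bind_eq_some_iff.mp h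
  rw [hab x hx]
  exact Option.bind_eq_some_iff.mpr ⟨x, rfl, hk x z hkx⟩

section SynthFEq
variable (fuel : ℕ) (Γ : Ctx)

theorem synthF_ctx {ρ σ : SC} {i : ℕ} (hc : ctxIndex Γ ρ σ = some i) :
    SynthF (fuel+1) Γ ρ σ = some [Orch.var i] := by simp [SynthF, hc]

theorem synthF_one {σ : SC} (hc : ctxIndex Γ SC.one σ = none) :
    SynthF (fuel+1) Γ SC.one σ = some [Orch.one] := by simp [SynthF, hc]

theorem synthF_muL {b σ : SC} (hc : ctxIndex Γ (SC.mu b) σ = none) :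
    SynthF (fuel+1) Γ (SC.mu b) σ = SynthF fuel Γ b.unfold σ := by simp [SynthF, hc]

theorem synthF_muR_var {x : ℕ} {b : SC} (hc : ctxIndex Γ (SC.var x) (SC.mu b) = none) :
    SynthF (fuel+1) Γ (SC.var x) (SC.mu b) = SynthF fuel Γ (SC.var x) b.unfold := by
  simp [SynthF, hc]

theorem synthF_muR_ext {l : List (Name × SC)} {b : SC}
    (hc : ctxIndex Γ (SC.ext l) (SC.mu b) = none) :
    SynthF (fuel+1) Γ (SC.ext l) (SC.mu b) = SynthF fuel Γ (SC.ext l) b.unfold := by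
  simp [SynthF, hc]

theorem synthF_muR_int {l : List (Name × SC)} {b : SC}
    (hc : ctxIndex Γ (SC.int l) (SC.mu b) = none) :
    SynthF (fuel+1) Γ (SC.int l) (SC.mu b) = SynthF fuel Γ (SC.int l) b.unfold := by
  simp [SynthF, hc]

theorem synthF_ext_ext {lI lJ : List (Name × SC)}
    (hc : ctxIndex Γ (SC.ext lI) (SC.ext lJ) = none) :
    SynthF (fuel+1) Γ (SC.ext lI) (SC.ext lJ) = (do
          let rs1 ← optMapM (fun p => do
              let fs ← SynthF fuel ((SC.ext lI, SC.ext lJ) :: Γ) p.2 (SC.ext lJ)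
              pure (fs.map fun f => Orch.mu (.choice [(OAct.cOut p.1, f)]))) lI
          let rs2 ← optMapM (fun p => do
              let fs ← SynthF fuel ((SC.ext lI, SC.ext lJ) :: Γ) (SC.ext lI) p.2
              pure (fs.map fun f => Orch.mu (.choice [(OAct.sOut p.1, f)]))) lJ
          pure (rs1.flatten ++ rs2.flatten)) := by
  simp [SynthF, hc]

theorem synthF_int_int {lI lJ : List (Name × SC)}
    (hc : ctxIndex Γ (SC.int lI) (SC.int lJ) = none) :
    SynthF (fuel+1) Γ (SC.int lI) (SC.int lJ) = (do
          let fssI ← optMapM (fun p => SynthF fuel ((SC.int lI, SC.int lJ) :: Γ) p.2 (SC.int lJ)) lI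
          let fssJ ← optMapM (fun p => SynthF fuel ((SC.int lI, SC.int lJ) :: Γ) (SC.int lI) p.2) lJ
          pure ((selections fssI).map (fun sel =>
                  Orch.mu (.choice (List.zipWith (fun p f => (OAct.cIn p.1, f)) lI sel)))
             ++ (selections fssJ).map (fun sel =>
                  Orch.mu (.choice (List.zipWith (fun p f => (OAct.sIn p.1, f)) lJ sel))))) := by
  simp [SynthF, hc]

theorem synthF_int_ext {lI lJ : List (Name × SC)}
    (hc : ctxIndex Γ (SC.int lI) (SC.ext lJ) = none) :
    SynthF (fuel+1) Γ (SC.int lI) (SC.ext lJ) = (do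
          let rsSplit ← optMapM (fun hk : List (Name × SC) × List (Name × SC) => do
              let fssH ← optMapM (fun p => SynthF fuel ((SC.int lI, SC.ext lJ) :: Γ) p.2 (SC.ext lJ)) hk.1
              let fssK ← optMapM (fun p => do
                  let σk ← List.lookup p.1 lJ
                  SynthF fuel ((SC.int lI, SC.ext lJ) :: Γ) p.2 σk) hk.2
              pure ((selections fssH).flatMap fun selH =>
                    (selections fssK).map fun selK =>
                      Orch.mu (.choice (List.zipWith (fun p f => (OAct.cIn p.1, f)) hk.1 selH
                        ++ List.zipWith (fun p f => (OAct.cSync p.1, f)) hk.2 selK))))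
              (lI.sublists.flatMap fun lH => lI.sublists.filterMap fun lK =>
              if (lI.all fun p => lH.any (brBeq p) || lK.any (brBeq p)) &&
                 (lK.all fun p => lJ.any fun q => q.1 == p.1)
              then some (lH, lK) else none)
          let rs2 ← optMapM (fun p => do
              let fs ← SynthF fuel ((SC.int lI, SC.ext lJ) :: Γ) (SC.int lI) p.2
              pure (fs.map fun f => Orch.mu (.choice [(OAct.sOut p.1, f)]))) lJ
          pure (rsSplit.flatten ++ rs2.flatten)) := by
  simp [SynthF, hc]

theorem synthF_ext_int {lI lJ : List (Name × SC)}
    (hc : ctxIndex Γ (SC.ext lI) (SC.int lJ) = none) :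
    SynthF (fuel+1) Γ (SC.ext lI) (SC.int lJ) = (do
          let rsSplit ← optMapM (fun hk : List (Name × SC) × List (Name × SC) => do
              let fssH ← optMapM (fun p => SynthF fuel ((SC.ext lI, SC.int lJ) :: Γ) (SC.ext lI) p.2) hk.1
              let fssK ← optMapM (fun p => do
                  let ρk ← List.lookup p.1 lI
                  SynthF fuel ((SC.ext lI, SC.int lJ) :: Γ) ρk p.2) hk.2
              pure ((selections fssH).flatMap fun selH =>
                    (selections fssK).map fun selK =>
                      Orch.mu (.choice (List.zipWith (fun p f => (OAct.sIn p.1, f)) hk.1 selH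
                        ++ List.zipWith (fun p f => (OAct.sSync p.1, f)) hk.2 selK))))
              (lJ.sublists.flatMap fun lH => lJ.sublists.filterMap fun lK =>
              if (lJ.all fun p => lH.any (brBeq p) || lK.any (brBeq p)) &&
                 (lK.all fun p => lI.any fun q => q.1 == p.1)
              then some (lH, lK) else none)
          let rs1 ← optMapM (fun p => do
              let fs ← SynthF fuel ((SC.ext lI, SC.int lJ) :: Γ) p.2 (SC.int lJ)
              pure (fs.map fun f => Orch.mu (.choice [(OAct.cOut p.1, f)]))) lI
          pure (rsSplit.flatten ++ rs1.flatten)) := by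
  simp [SynthF, hc]

theorem synthF_var_one {x : ℕ} (hc : ctxIndex Γ (SC.var x) SC.one = none) :
    SynthF (fuel+1) Γ (SC.var x) SC.one = some [] := by simp [SynthF, hc]
theorem synthF_var_var {x y : ℕ} (hc : ctxIndex Γ (SC.var x) (SC.var y) = none) :
    SynthF (fuel+1) Γ (SC.var x) (SC.var y) = some [] := by simp [SynthF, hc]
theorem synthF_var_ext {x : ℕ} {l : List (Name × SC)}
    (hc : ctxIndex Γ (SC.var x) (SC.ext l) = none) :
    SynthF (fuel+1) Γ (SC.var x) (SC.ext l) = some [] := by simp [SynthF, hc]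
theorem synthF_var_int {x : ℕ} {l : List (Name × SC)}
    (hc : ctxIndex Γ (SC.var x) (SC.int l) = none) :
    SynthF (fuel+1) Γ (SC.var x) (SC.int l) = some [] := by simp [SynthF, hc]
theorem synthF_ext_one {l : List (Name × SC)} (hc : ctxIndex Γ (SC.ext l) SC.one = none) :
    SynthF (fuel+1) Γ (SC.ext l) SC.one = some [] := by simp [SynthF, hc]
theorem synthF_ext_var {l : List (Name × SC)} {y : ℕ}
    (hc : ctxIndex Γ (SC.ext l) (SC.var y) = none) :
    SynthF (fuel+1) Γ (SC.ext l) (SC.var y) = some [] := by simp [SynthF, hc]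
theorem synthF_int_one {l : List (Name × SC)} (hc : ctxIndex Γ (SC.int l) SC.one = none) :
    SynthF (fuel+1) Γ (SC.int l) SC.one = some [] := by simp [SynthF, hc]
theorem synthF_int_var {l : List (Name × SC)} {y : ℕ}
    (hc : ctxIndex Γ (SC.int l) (SC.var y) = none) :
    SynthF (fuel+1) Γ (SC.int l) (SC.var y) = some [] := by simp [SynthF, hc]

end SynthFEq
theorem synthF_succ : ∀ fuel Γ ρ σ F, SynthF fuel Γ ρ σ = some F →
    SynthF (fuel+1) Γ ρ σ = some F := by
  intro fuel
  induction fuel with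
  | zero => intro Γ ρ σ F h; simp [SynthF] at h
  | succ n IH =>
    intro Γ ρ σ F h
    cases hc : ctxIndex Γ ρ σ with
    | some i => rw [synthF_ctx _ _ hc] at h ⊢; exact h
    | none =>
      cases ρ with
      | one => rw [synthF_one _ _ hc] at h ⊢; exact h
      | var x =>
          cases σ with
          | mu b => rw [synthF_muR_var _ _ hc] at h ⊢; exact IH _ _ _ _ h
          | one => rw [synthF_var_one _ _ hc] at h ⊢; exact h
          | var y => rw [synthF_var_var _ _ hc] at h ⊢; exact h
          | ext l => rw [synthF_var_ext _ _ hc] at h ⊢; exact h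
          | int l => rw [synthF_var_int _ _ hc] at h ⊢; exact h
      | mu b => rw [synthF_muL _ _ hc] at h ⊢; exact IH _ _ _ _ h
      | ext lI =>
          cases σ with
          | mu b => rw [synthF_muR_ext _ _ hc] at h ⊢; exact IH _ _ _ _ h
          | one => rw [synthF_ext_one _ _ hc] at h ⊢; exact h
          | var y => rw [synthF_ext_var _ _ hc] at h ⊢; exact h
          | ext lJ =>
              rw [synthF_ext_ext _ _ hc] at h ⊢
              refine bind_mono (fun x hx => optMapM_mono ?_ hx) (fun rs1 y hy =>
                bind_mono (fun x hx => optMapM_mono ?_ hx) (fun rs2 z hz => hz) y hy) F h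
              · exact fun p hp => bind_mono (fun x hx => IH _ _ _ _ hx) (fun _ _ h' => h')
              · exact fun p hp => bind_mono (fun x hx => IH _ _ _ _ hx) (fun _ _ h' => h')
          | int lJ =>
              rw [synthF_ext_int _ _ hc] at h ⊢
              refine bind_mono (fun x hx => optMapM_mono ?_ hx) (fun rsSplit y hy =>
                bind_mono (fun x hx => optMapM_mono ?_ hx) (fun rs1 z hz => hz) y hy) F h
              · exact fun hk hhk => bind_mono
                  (fun x hx => optMapM_mono (fun p hp => fun y hy => IH _ _ _ _ hy) hx)
                  (fun fssH y hy => bind_mono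
                    (fun x hx => optMapM_mono (fun p hp => bind_mono
                      (fun x' hx' => hx') (fun ρk y' hy' => IH _ _ _ _ hy')) hx)
                    (fun fssK z hz => hz) y hy)
              · exact fun p hp => bind_mono (fun x hx => IH _ _ _ _ hx) (fun _ _ h' => h')
      | int lI =>
          cases σ with
          | mu b => rw [synthF_muR_int _ _ hc] at h ⊢; exact IH _ _ _ _ h
          | one => rw [synthF_int_one _ _ hc] at h ⊢; exact h
          | var y => rw [synthF_int_var _ _ hc] at h ⊢; exact h
          | int lJ =>
              rw [synthF_int_int _ _ hc] at h ⊢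
              refine bind_mono (fun x hx => optMapM_mono ?_ hx) (fun fssI y hy =>
                bind_mono (fun x hx => optMapM_mono ?_ hx) (fun fssJ z hz => hz) y hy) F h
              · exact fun p hp y hy => IH _ _ _ _ hy
              · exact fun p hp y hy => IH _ _ _ _ hy
          | ext lJ =>
              rw [synthF_int_ext _ _ hc] at h ⊢
              refine bind_mono (fun x hx => optMapM_mono ?_ hx) (fun rsSplit y hy =>
                bind_mono (fun x hx => optMapM_mono ?_ hx) (fun rs2 z hz => hz) y hy) F h
              · exact fun hk hhk => bind_mono
                  (fun x hx => optMapM_mono (fun p hp => fun y hy => IH _ _ _ _ hy) hx)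
                  (fun fssH y hy => bind_mono
                    (fun x hx => optMapM_mono (fun p hp => bind_mono
                      (fun x' hx' => hx') (fun σk y' hy' => IH _ _ _ _ hy')) hx)
                    (fun fssK z hz => hz) y hy)
              · exact fun p hp => bind_mono (fun x hx => IH _ _ _ _ hx) (fun _ _ h' => h')

theorem synthF_mono {fuel fuel' : ℕ} (hle : fuel ≤ fuel') {Γ : Ctx} {ρ σ : SC} {F : List Orch}
    (h : SynthF fuel Γ ρ σ = some F) : SynthF fuel' Γ ρ σ = some F := by
  induction hle with
  | refl => exact h
  | step _ ih => exact synthF_succ _ _ _ _ _ ih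
/-! ### Measure infrastructure for termination -/

theorem pairBeq_refl (p : SC × SC) : pairBeq p p = true := by
  simp [pairBeq, SC.beq_refl]

theorem ctxIndex_none_iff {Γ : Ctx} {ρ σ : SC} (hc : ctxIndex Γ ρ σ = none) :
    ∀ q ∈ Γ, pairBeq q (ρ, σ) = false := by
  intro q hq
  have := List.findIdx?_eq_none_iff.1 hc
  simpa using this q hq

def prodCS (Tc Ts : List SC) : List (SC × SC) :=
  Tc.flatMap fun a => Ts.map fun b => (a, b)

theorem mem_prodCS {Tc Ts : List SC} {ρ σ : SC} (hρ : ρ ∈ Tc) (hσ : σ ∈ Ts) :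
    (ρ, σ) ∈ prodCS Tc Ts :=
  List.mem_flatMap.2 ⟨ρ, hρ, List.mem_map.2 ⟨σ, hσ, rfl⟩⟩

def cnt (Tc Ts : List SC) (Γ : Ctx) : ℕ :=
  ((prodCS Tc Ts).filter fun p => !(Γ.any fun q => pairBeq q p)).length

theorem cnt_cons_le {Tc Ts : List SC} {Γ : Ctx} (q : SC × SC) :
    cnt Tc Ts (q :: Γ) ≤ cnt Tc Ts Γ :=
  (List.monotone_filter_right _ (by
    intro p hp
    simp only [List.any_cons, Bool.not_or, Bool.and_eq_true, Bool.not_eq_true'] at hp ⊢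
    exact hp.2)).length_le

theorem cnt_lt {Tc Ts : List SC} {Γ : Ctx} {ρ σ : SC}
    (hp : (ρ, σ) ∈ prodCS Tc Ts) (hc : ctxIndex Γ ρ σ = none) :
    cnt Tc Ts ((ρ, σ) :: Γ) < cnt Tc Ts Γ := by
  have hnot := ctxIndex_none_iff hc
  have hsub : List.Sublist
      ((prodCS Tc Ts).filter fun p => !((((ρ, σ) :: Γ)).any fun q => pairBeq q p))
      ((prodCS Tc Ts).filter fun p => !(Γ.any fun q => pairBeq q p)) :=
    List.monotone_filter_right _ (by
      intro p hp
      simp only [List.any_cons, Bool.not_or, Bool.and_eq_true, Bool.not_eq_true'] at hp ⊢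
      exact hp.2)
  refine Nat.lt_of_le_of_ne hsub.length_le (fun heq => ?_)
  have heql := hsub.eq_of_length heq
  have hmem : (ρ, σ) ∈ (prodCS Tc Ts).filter fun p => !(Γ.any fun q => pairBeq q p) := by
    refine List.mem_filter.2 ⟨hp, ?_⟩
    simp only [Bool.not_eq_true', List.any_eq_false]
    intro q hq
    simpa using hnot q hq
  rw [← heql] at hmem
  have := (List.mem_filter.1 hmem).2
  simp only [List.any_cons, pairBeq_refl, Bool.true_or, Bool.not_true] at this
  exact Bool.false_ne_true this

theorem cnt_pos {Tc Ts : List SC} {Γ : Ctx} {ρ σ : SC}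
    (hp : (ρ, σ) ∈ prodCS Tc Ts) (hc : ctxIndex Γ ρ σ = none) :
    1 ≤ cnt Tc Ts Γ := by
  have := cnt_lt hp hc
  omega

def muB (Tc Ts : List SC) : ℕ := ((Tc ++ Ts).map SC.muD).foldr max 0

theorem le_foldr_max {l : List ℕ} {a : ℕ} (h : a ∈ l) : a ≤ l.foldr max 0 := by
  induction l with
  | nil => cases h
  | cons b t ih =>
      rcases List.mem_cons.1 h with rfl | h
      · exact le_max_left _ _
      · exact le_trans (ih h) (le_max_right _ _)

theorem muD_le_muB_left {Tc Ts : List SC} {ρ : SC} (h : ρ ∈ Tc) :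
    SC.muD ρ ≤ muB Tc Ts :=
  le_foldr_max (List.mem_map.2 ⟨ρ, List.mem_append_left _ h, rfl⟩)

theorem muD_le_muB_right {Tc Ts : List SC} {σ : SC} (h : σ ∈ Ts) :
    SC.muD σ ≤ muB Tc Ts :=
  le_foldr_max (List.mem_map.2 ⟨σ, List.mem_append_right _ h, rfl⟩)

theorem list_bound {α : Type _} {l : List α} {P : α → ℕ → Prop}
    (hmono : ∀ x n m, n ≤ m → P x n → P x m)
    (h : ∀ x ∈ l, ∃ n, P x n) : ∃ N, ∀ x ∈ l, P x N := by
  induction l with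
  | nil => exact ⟨0, by simp⟩
  | cons a t ih =>
      obtain ⟨n, hn⟩ := h a (by simp)
      obtain ⟨N, hN⟩ := ih (fun x hx => h x (by simp [hx]))
      refine ⟨max n N, fun x hx => ?_⟩
      rcases List.mem_cons.1 hx with rfl | hx
      · exact hmono x n _ (le_max_left _ _) hn
      · exact hmono x N _ (le_max_right _ _) (hN x hx)

theorem optMapM_some {α β : Type _} {f : α → Option β} {l : List α}
    (h : ∀ x ∈ l, ∃ y, f x = some y) : ∃ ys, optMapM f l = some ys :=
  Option.isSome_iff_exists.1 (optMapM_isSome (fun x hx =>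
    Option.isSome_iff_exists.2 (h x hx)))

theorem lookup_exists {l : List (Name × SC)} {a : Name}
    (h : ∃ q ∈ l, (q.1 == a) = true) : ∃ b, List.lookup a l = some b := by
  induction l with
  | nil => simp at h
  | cons c t ih =>
      by_cases hac : a == c.1
      · exact ⟨c.2, by rw [List.lookup_cons]; simp [hac]⟩
      · obtain ⟨q, hq, hqa⟩ := h
        rcases List.mem_cons.1 hq with rfl | hq
        · exfalso
          have hca : q.1 = a := by simpa using hqa
          exact hac (by simp [hca])
        · obtain ⟨b, hb⟩ := ih ⟨q, hq, hqa⟩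
          exact ⟨b, by rw [List.lookup_cons]; simp [hac, hb]⟩

theorem lookup_mem {l : List (Name × SC)} {a : Name} {b : SC}
    (h : List.lookup a l = some b) : (a, b) ∈ l := by
  induction l with
  | nil => simp [List.lookup] at h
  | cons c t ih =>
      rw [List.lookup_cons] at h
      by_cases hac : a == c.1
      · simp only [hac, if_true, Option.some.injEq] at h
        have : a = c.1 := by simpa using hac
        subst this; subst h
        exact List.mem_cons_self
      · simp only [hac, if_false] at h
        exact List.mem_cons_of_mem _ (ih h)

theorem term_main (Tc Ts : List SC) (hTcD : SC.DClosed Tc) (hTsD : SC.DClosed Ts)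
    (hTcW : ∀ t ∈ Tc, SC.WF t) (hTsW : ∀ t ∈ Ts, SC.WF t) :
    ∀ k Γ ρ σ, (2 * muB Tc Ts + 1) * cnt Tc Ts Γ + SC.muD ρ + SC.muD σ ≤ k →
      ρ ∈ Tc → σ ∈ Ts → ∃ n F, SynthF n Γ ρ σ = some F := by
  intro k
  induction k using Nat.strong_induction_on with
  | _ k IHk =>
  intro Γ ρ σ hm hρ hσ
  cases hc : ctxIndex Γ ρ σ with
  | some i => exact ⟨1, _, synthF_ctx 0 Γ hc⟩
  | none =>
    have hprod := mem_prodCS hρ hσ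
    have hY1 : 2 * muB Tc Ts + 1 ≤ (2 * muB Tc Ts + 1) * cnt Tc Ts Γ := by
      have := Nat.mul_le_mul_left (2 * muB Tc Ts + 1) (cnt_pos hprod hc)
      rwa [Nat.mul_one] at this
    cases ρ with
    | one => exact ⟨1, _, synthF_one 0 Γ hc⟩
    | mu b =>
        have hwf : SC.WF (SC.mu b) := hTcW _ hρ
        have hub : b.unfold ∈ Tc := hTcD _ hρ _ (SC.Dstep.mu b)
        have hmu : SC.muD (SC.mu b) = SC.muD b.unfold + 1 := by
          rw [SC.muD_unfold hwf]; rfl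
        obtain ⟨n, F, hF⟩ := IHk (k-1) (by omega) Γ b.unfold σ (by omega) hub hσ
        exact ⟨n+1, F, by rw [synthF_muL n Γ hc]; exact hF⟩
    | var x =>
        have hmx : SC.muD (SC.var x) = 0 := rfl
        cases σ with
        | mu b =>
            have hwf : SC.WF (SC.mu b) := hTsW _ hσ
            have hub : b.unfold ∈ Ts := hTsD _ hσ _ (SC.Dstep.mu b)
            have hmu : SC.muD (SC.mu b) = SC.muD b.unfold + 1 := by
              rw [SC.muD_unfold hwf]; rfl
            obtain ⟨n, F, hF⟩ := IHk (k-1) (by omega) Γ (SC.var x) b.unfold (by omega) hρ hub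
            exact ⟨n+1, F, by rw [synthF_muR_var n Γ hc]; exact hF⟩
        | one => exact ⟨1, _, synthF_var_one 0 Γ hc⟩
        | var y => exact ⟨1, _, synthF_var_var 0 Γ hc⟩
        | ext l => exact ⟨1, _, synthF_var_ext 0 Γ hc⟩
        | int l => exact ⟨1, _, synthF_var_int 0 Γ hc⟩
    | ext lI =>
        have hmI : SC.muD (SC.ext lI) = 0 := rfl
        cases σ with
        | mu b =>
            have hwf : SC.WF (SC.mu b) := hTsW _ hσ
            have hub : b.unfold ∈ Ts := hTsD _ hσ _ (SC.Dstep.mu b)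
            have hmu : SC.muD (SC.mu b) = SC.muD b.unfold + 1 := by
              rw [SC.muD_unfold hwf]; rfl
            obtain ⟨n, F, hF⟩ := IHk (k-1) (by omega) Γ (SC.ext lI) b.unfold (by omega) hρ hub
            exact ⟨n+1, F, by rw [synthF_muR_ext n Γ hc]; exact hF⟩
        | one => exact ⟨1, _, synthF_ext_one 0 Γ hc⟩
        | var y => exact ⟨1, _, synthF_ext_var 0 Γ hc⟩

        | ext lJ =>
            have hmJ : SC.muD (SC.ext lJ) = 0 := rfl
            have hcnt := cnt_lt hprod hc
            have hmul : (2 * muB Tc Ts + 1) * cnt Tc Ts ((SC.ext lI, SC.ext lJ) :: Γ)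
                + (2 * muB Tc Ts + 1) ≤ (2 * muB Tc Ts + 1) * cnt Tc Ts Γ := by
              have h := Nat.mul_le_mul_left (2 * muB Tc Ts + 1)
                (show cnt Tc Ts ((SC.ext lI, SC.ext lJ) :: Γ) + 1 ≤ cnt Tc Ts Γ by omega)
              rwa [Nat.mul_add, Nat.mul_one] at h
            have hPI : ∃ N, ∀ p ∈ lI, ∃ F,
                SynthF N ((SC.ext lI, SC.ext lJ) :: Γ) p.2 (SC.ext lJ) = some F := by
              refine list_bound (fun p n m hnm h => ?_) (fun p hp => ?_)
              · obtain ⟨F, hF⟩ := h; exact ⟨F, synthF_mono hnm hF⟩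
              · have hp2 : p.2 ∈ Tc := hTcD _ hρ _ (SC.Dstep.ext lI p hp)
                have hb := muD_le_muB_left (Ts := Ts) hp2
                obtain ⟨n, F, hF⟩ := IHk (k-1) (by omega) ((SC.ext lI, SC.ext lJ) :: Γ) p.2 (SC.ext lJ)
                  (by omega) hp2 hσ
                exact ⟨n, F, hF⟩
            have hPJ : ∃ N, ∀ p ∈ lJ, ∃ F,
                SynthF N ((SC.ext lI, SC.ext lJ) :: Γ) (SC.ext lI) p.2 = some F := by
              refine list_bound (fun p n m hnm h => ?_) (fun p hp => ?_)
              · obtain ⟨F, hF⟩ := h; exact ⟨F, synthF_mono hnm hF⟩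
              · have hp2 : p.2 ∈ Ts := hTsD _ hσ _ (SC.Dstep.ext lJ p hp)
                have hb := muD_le_muB_right (Tc := Tc) hp2
                obtain ⟨n, F, hF⟩ := IHk (k-1) (by omega) ((SC.ext lI, SC.ext lJ) :: Γ) (SC.ext lI) p.2
                  (by omega) hρ hp2
                exact ⟨n, F, hF⟩
            obtain ⟨N1, hN1⟩ := hPI
            obtain ⟨N2, hN2⟩ := hPJ
            obtain ⟨rs1, hrs1⟩ := optMapM_some (l := lI)
              (f := fun p => do
                let fs ← SynthF (max N1 N2) ((SC.ext lI, SC.ext lJ) :: Γ) p.2 (SC.ext lJ)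
                pure (fs.map fun f => Orch.mu (.choice [(OAct.cOut p.1, f)])))
              (fun p hp => by
                obtain ⟨F, hF⟩ := hN1 p hp
                have hF' := synthF_mono (le_max_left N1 N2) hF
                exact ⟨F.map fun f => Orch.mu (.choice [(OAct.cOut p.1, f)]), by simp [hF']⟩)
            obtain ⟨rs2, hrs2⟩ := optMapM_some (l := lJ)
              (f := fun p => do
                let fs ← SynthF (max N1 N2) ((SC.ext lI, SC.ext lJ) :: Γ) (SC.ext lI) p.2
                pure (fs.map fun f => Orch.mu (.choice [(OAct.sOut p.1, f)])))
              (fun p hp => by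
                obtain ⟨F, hF⟩ := hN2 p hp
                have hF' := synthF_mono (le_max_right N1 N2) hF
                exact ⟨F.map fun f => Orch.mu (.choice [(OAct.sOut p.1, f)]), by simp [hF']⟩)
            refine ⟨max N1 N2 + 1, rs1.flatten ++ rs2.flatten, ?_⟩
            rw [synthF_ext_ext (max N1 N2) Γ hc]
            simp only [Option.pure_def, Option.bind_eq_bind] at hrs1 hrs2
            simp [hrs1, hrs2]


        | int lJ =>
            have hmJ : SC.muD (SC.int lJ) = 0 := rfl
            have hcnt := cnt_lt hprod hc
            have hmul : (2 * muB Tc Ts + 1) * cnt Tc Ts ((SC.ext lI, SC.int lJ) :: Γ)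
                + (2 * muB Tc Ts + 1) ≤ (2 * muB Tc Ts + 1) * cnt Tc Ts Γ := by
              have h := Nat.mul_le_mul_left (2 * muB Tc Ts + 1)
                (show cnt Tc Ts ((SC.ext lI, SC.int lJ) :: Γ) + 1 ≤ cnt Tc Ts Γ by omega)
              rwa [Nat.mul_add, Nat.mul_one] at h
            have hPJ : ∃ N, ∀ p ∈ lJ,
                (∃ F, SynthF N ((SC.ext lI, SC.int lJ) :: Γ) (SC.ext lI) p.2 = some F) ∧
                (∀ ρk, List.lookup p.1 lI = some ρk →
                  ∃ F, SynthF N ((SC.ext lI, SC.int lJ) :: Γ) ρk p.2 = some F) := by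
              refine list_bound (fun p n m hnm h => ?_) (fun p hp => ?_)
              · obtain ⟨⟨F, hF⟩, h2⟩ := h
                refine ⟨⟨F, synthF_mono hnm hF⟩, fun ρk hρk => ?_⟩
                obtain ⟨F2, hF2⟩ := h2 ρk hρk
                exact ⟨F2, synthF_mono hnm hF2⟩
              · have hp2 : p.2 ∈ Ts := hTsD _ hσ _ (SC.Dstep.int lJ p hp)
                have hb := muD_le_muB_right (Tc := Tc) hp2
                obtain ⟨n1, F1, hF1⟩ := IHk (k-1) (by omega) ((SC.ext lI, SC.int lJ) :: Γ) (SC.ext lI) p.2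
                  (by omega) hρ hp2
                cases hlk : List.lookup p.1 lI with
                | none =>
                    exact ⟨n1, ⟨F1, hF1⟩, fun ρk hρk => by cases hρk⟩
                | some ρk =>
                    have hρk2 : ρk ∈ Tc :=
                      hTcD _ hρ _ (SC.Dstep.ext lI (p.1, ρk) (lookup_mem hlk))
                    have hbk := muD_le_muB_left (Ts := Ts) hρk2
                    obtain ⟨n2, F2, hF2⟩ := IHk (k-1) (by omega) ((SC.ext lI, SC.int lJ) :: Γ) ρk p.2
                      (by omega) hρk2 hp2
                    refine ⟨max n1 n2, ⟨F1, synthF_mono (le_max_left n1 n2) hF1⟩,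
                      fun ρk2 hρk2' => ?_⟩
                    injection hρk2' with h'
                    subst h'
                    exact ⟨F2, synthF_mono (le_max_right n1 n2) hF2⟩
            have hPI : ∃ N, ∀ p ∈ lI, ∃ F,
                SynthF N ((SC.ext lI, SC.int lJ) :: Γ) p.2 (SC.int lJ) = some F := by
              refine list_bound (fun p n m hnm h => ?_) (fun p hp => ?_)
              · obtain ⟨F, hF⟩ := h; exact ⟨F, synthF_mono hnm hF⟩
              · have hp2 : p.2 ∈ Tc := hTcD _ hρ _ (SC.Dstep.ext lI p hp)
                have hb := muD_le_muB_left (Ts := Ts) hp2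
                obtain ⟨n, F, hF⟩ := IHk (k-1) (by omega) ((SC.ext lI, SC.int lJ) :: Γ) p.2 (SC.int lJ)
                  (by omega) hp2 hσ
                exact ⟨n, F, hF⟩
            obtain ⟨N1, hN1⟩ := hPJ
            obtain ⟨N2, hN2⟩ := hPI
            obtain ⟨rsSplit, hrsSplit⟩ := optMapM_some
              (l := lJ.sublists.flatMap fun lH => lJ.sublists.filterMap fun lK =>
                if (lJ.all fun p => lH.any (brBeq p) || lK.any (brBeq p)) &&
                   (lK.all fun p => lI.any fun q => q.1 == p.1)
                then some (lH, lK) else none)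
              (f := fun hk : List (Name × SC) × List (Name × SC) => do
                let fssH ← optMapM (fun p =>
                    SynthF (max N1 N2) ((SC.ext lI, SC.int lJ) :: Γ) (SC.ext lI) p.2) hk.1
                let fssK ← optMapM (fun p => do
                    let ρk ← List.lookup p.1 lI
                    SynthF (max N1 N2) ((SC.ext lI, SC.int lJ) :: Γ) ρk p.2) hk.2
                pure ((selections fssH).flatMap fun selH =>
                      (selections fssK).map fun selK =>
                        Orch.mu (.choice (List.zipWith (fun p f => (OAct.sIn p.1, f)) hk.1 selH
                          ++ List.zipWith (fun p f => (OAct.sSync p.1, f)) hk.2 selK))))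
              (fun hk hhk => by
                obtain ⟨lH, hlH, hfm⟩ := List.mem_flatMap.1 hhk
                obtain ⟨lK, hlK, hif⟩ := List.mem_filterMap.1 hfm
                by_cases hcond : ((lJ.all fun p => lH.any (brBeq p) || lK.any (brBeq p)) &&
                   (lK.all fun p => lI.any fun q => q.1 == p.1)) = true
                · rw [if_pos hcond] at hif
                  injection hif with hif
                  subst hif
                  have hHsub : ∀ p ∈ lH, p ∈ lJ :=
                    fun p hp => (List.mem_sublists.1 hlH).subset hp
                  have hKsub : ∀ p ∈ lK, p ∈ lJ :=
                    fun p hp => (List.mem_sublists.1 hlK).subset hp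
                  have hKlook : ∀ p ∈ lK, ∃ q ∈ lI, (q.1 == p.1) = true := by
                    intro p hp
                    have hcond2 := hcond
                    rw [Bool.and_eq_true] at hcond2
                    have := (List.all_eq_true.1 hcond2.2) p hp
                    simpa using List.any_eq_true.1 this
                  obtain ⟨fssH, hH⟩ := optMapM_some (l := lH)
                    (f := fun p =>
                      SynthF (max N1 N2) ((SC.ext lI, SC.int lJ) :: Γ) (SC.ext lI) p.2)
                    (fun p hp => by
                      obtain ⟨F, hF⟩ := (hN1 p (hHsub p hp)).1
                      exact ⟨F, synthF_mono (le_max_left N1 N2) hF⟩)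
                  obtain ⟨fssK, hK⟩ := optMapM_some (l := lK)
                    (f := fun p => do
                      let ρk ← List.lookup p.1 lI
                      SynthF (max N1 N2) ((SC.ext lI, SC.int lJ) :: Γ) ρk p.2)
                    (fun p hp => by
                      obtain ⟨ρk, hlk⟩ := lookup_exists (hKlook p hp)
                      obtain ⟨F, hF⟩ := (hN1 p (hKsub p hp)).2 ρk hlk
                      have hF' := synthF_mono (le_max_left N1 N2) hF
                      exact ⟨F, by simp [hlk, hF']⟩)
                  exact ⟨(selections fssH).flatMap fun selH =>
                      (selections fssK).map fun selK =>
                        Orch.mu (.choice (List.zipWith (fun p f => (OAct.sIn p.1, f)) lH selH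
                          ++ List.zipWith (fun p f => (OAct.sSync p.1, f)) lK selK)),
                    by
                      simp only [Option.pure_def, Option.bind_eq_bind] at hH hK
                      simp [hH, hK]⟩
                · rw [if_neg hcond] at hif; cases hif)
            obtain ⟨rs1, hrs1⟩ := optMapM_some (l := lI)
              (f := fun p => do
                let fs ← SynthF (max N1 N2) ((SC.ext lI, SC.int lJ) :: Γ) p.2 (SC.int lJ)
                pure (fs.map fun f => Orch.mu (.choice [(OAct.cOut p.1, f)])))
              (fun p hp => by
                obtain ⟨F, hF⟩ := hN2 p hp
                have hF' := synthF_mono (le_max_right N1 N2) hF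
                exact ⟨F.map fun f => Orch.mu (.choice [(OAct.cOut p.1, f)]), by simp [hF']⟩)
            refine ⟨max N1 N2 + 1, rsSplit.flatten ++ rs1.flatten, ?_⟩
            rw [synthF_ext_int (max N1 N2) Γ hc]
            simp only [Option.pure_def, Option.bind_eq_bind] at hrsSplit hrs1
            simp [hrsSplit, hrs1]

    | int lI =>
        have hmI : SC.muD (SC.int lI) = 0 := rfl
        cases σ with
        | mu b =>
            have hwf : SC.WF (SC.mu b) := hTsW _ hσ
            have hub : b.unfold ∈ Ts := hTsD _ hσ _ (SC.Dstep.mu b)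
            have hmu : SC.muD (SC.mu b) = SC.muD b.unfold + 1 := by
              rw [SC.muD_unfold hwf]; rfl
            obtain ⟨n, F, hF⟩ := IHk (k-1) (by omega) Γ (SC.int lI) b.unfold (by omega) hρ hub
            exact ⟨n+1, F, by rw [synthF_muR_int n Γ hc]; exact hF⟩
        | one => exact ⟨1, _, synthF_int_one 0 Γ hc⟩
        | var y => exact ⟨1, _, synthF_int_var 0 Γ hc⟩

        | int lJ =>
            have hmJ : SC.muD (SC.int lJ) = 0 := rfl
            have hcnt := cnt_lt hprod hc
            have hmul : (2 * muB Tc Ts + 1) * cnt Tc Ts ((SC.int lI, SC.int lJ) :: Γ)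
                + (2 * muB Tc Ts + 1) ≤ (2 * muB Tc Ts + 1) * cnt Tc Ts Γ := by
              have h := Nat.mul_le_mul_left (2 * muB Tc Ts + 1)
                (show cnt Tc Ts ((SC.int lI, SC.int lJ) :: Γ) + 1 ≤ cnt Tc Ts Γ by omega)
              rwa [Nat.mul_add, Nat.mul_one] at h
            have hPI : ∃ N, ∀ p ∈ lI, ∃ F,
                SynthF N ((SC.int lI, SC.int lJ) :: Γ) p.2 (SC.int lJ) = some F := by
              refine list_bound (fun p n m hnm h => ?_) (fun p hp => ?_)
              · obtain ⟨F, hF⟩ := h; exact ⟨F, synthF_mono hnm hF⟩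
              · have hp2 : p.2 ∈ Tc := hTcD _ hρ _ (SC.Dstep.int lI p hp)
                have hb := muD_le_muB_left (Ts := Ts) hp2
                obtain ⟨n, F, hF⟩ := IHk (k-1) (by omega) ((SC.int lI, SC.int lJ) :: Γ) p.2 (SC.int lJ)
                  (by omega) hp2 hσ
                exact ⟨n, F, hF⟩
            have hPJ : ∃ N, ∀ p ∈ lJ, ∃ F,
                SynthF N ((SC.int lI, SC.int lJ) :: Γ) (SC.int lI) p.2 = some F := by
              refine list_bound (fun p n m hnm h => ?_) (fun p hp => ?_)
              · obtain ⟨F, hF⟩ := h; exact ⟨F, synthF_mono hnm hF⟩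
              · have hp2 : p.2 ∈ Ts := hTsD _ hσ _ (SC.Dstep.int lJ p hp)
                have hb := muD_le_muB_right (Tc := Tc) hp2
                obtain ⟨n, F, hF⟩ := IHk (k-1) (by omega) ((SC.int lI, SC.int lJ) :: Γ) (SC.int lI) p.2
                  (by omega) hρ hp2
                exact ⟨n, F, hF⟩
            obtain ⟨N1, hN1⟩ := hPI
            obtain ⟨N2, hN2⟩ := hPJ
            obtain ⟨fssI, hfssI⟩ := optMapM_some (l := lI)
              (f := fun p => SynthF (max N1 N2) ((SC.int lI, SC.int lJ) :: Γ) p.2 (SC.int lJ))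
              (fun p hp => by
                obtain ⟨F, hF⟩ := hN1 p hp
                exact ⟨F, synthF_mono (le_max_left N1 N2) hF⟩)
            obtain ⟨fssJ, hfssJ⟩ := optMapM_some (l := lJ)
              (f := fun p => SynthF (max N1 N2) ((SC.int lI, SC.int lJ) :: Γ) (SC.int lI) p.2)
              (fun p hp => by
                obtain ⟨F, hF⟩ := hN2 p hp
                exact ⟨F, synthF_mono (le_max_right N1 N2) hF⟩)
            refine ⟨max N1 N2 + 1,
              (selections fssI).map (fun sel =>
                  Orch.mu (.choice (List.zipWith (fun p f => (OAct.cIn p.1, f)) lI sel)))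
                ++ (selections fssJ).map (fun sel =>
                  Orch.mu (.choice (List.zipWith (fun p f => (OAct.sIn p.1, f)) lJ sel))), ?_⟩
            rw [synthF_int_int (max N1 N2) Γ hc]
            simp [hfssI, hfssJ]


        | ext lJ =>
            have hmJ : SC.muD (SC.ext lJ) = 0 := rfl
            have hcnt := cnt_lt hprod hc
            have hmul : (2 * muB Tc Ts + 1) * cnt Tc Ts ((SC.int lI, SC.ext lJ) :: Γ)
                + (2 * muB Tc Ts + 1) ≤ (2 * muB Tc Ts + 1) * cnt Tc Ts Γ := by
              have h := Nat.mul_le_mul_left (2 * muB Tc Ts + 1)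
                (show cnt Tc Ts ((SC.int lI, SC.ext lJ) :: Γ) + 1 ≤ cnt Tc Ts Γ by omega)
              rwa [Nat.mul_add, Nat.mul_one] at h
            have hPI : ∃ N, ∀ p ∈ lI,
                (∃ F, SynthF N ((SC.int lI, SC.ext lJ) :: Γ) p.2 (SC.ext lJ) = some F) ∧
                (∀ σk, List.lookup p.1 lJ = some σk →
                  ∃ F, SynthF N ((SC.int lI, SC.ext lJ) :: Γ) p.2 σk = some F) := by
              refine list_bound (fun p n m hnm h => ?_) (fun p hp => ?_)
              · obtain ⟨⟨F, hF⟩, h2⟩ := h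
                refine ⟨⟨F, synthF_mono hnm hF⟩, fun σk hσk => ?_⟩
                obtain ⟨F2, hF2⟩ := h2 σk hσk
                exact ⟨F2, synthF_mono hnm hF2⟩
              · have hp2 : p.2 ∈ Tc := hTcD _ hρ _ (SC.Dstep.int lI p hp)
                have hb := muD_le_muB_left (Ts := Ts) hp2
                obtain ⟨n1, F1, hF1⟩ := IHk (k-1) (by omega) ((SC.int lI, SC.ext lJ) :: Γ) p.2 (SC.ext lJ)
                  (by omega) hp2 hσ
                cases hlk : List.lookup p.1 lJ with
                | none =>
                    exact ⟨n1, ⟨F1, hF1⟩, fun σk hσk => by cases hσk⟩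
                | some σk =>
                    have hσk2 : σk ∈ Ts :=
                      hTsD _ hσ _ (SC.Dstep.ext lJ (p.1, σk) (lookup_mem hlk))
                    have hbk := muD_le_muB_right (Tc := Tc) hσk2
                    obtain ⟨n2, F2, hF2⟩ := IHk (k-1) (by omega) ((SC.int lI, SC.ext lJ) :: Γ) p.2 σk
                      (by omega) hp2 hσk2
                    refine ⟨max n1 n2, ⟨F1, synthF_mono (le_max_left n1 n2) hF1⟩,
                      fun σk2 hσk2' => ?_⟩
                    injection hσk2' with h'
                    subst h'
                    exact ⟨F2, synthF_mono (le_max_right n1 n2) hF2⟩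
            have hPJ : ∃ N, ∀ p ∈ lJ, ∃ F,
                SynthF N ((SC.int lI, SC.ext lJ) :: Γ) (SC.int lI) p.2 = some F := by
              refine list_bound (fun p n m hnm h => ?_) (fun p hp => ?_)
              · obtain ⟨F, hF⟩ := h; exact ⟨F, synthF_mono hnm hF⟩
              · have hp2 : p.2 ∈ Ts := hTsD _ hσ _ (SC.Dstep.ext lJ p hp)
                have hb := muD_le_muB_right (Tc := Tc) hp2
                obtain ⟨n, F, hF⟩ := IHk (k-1) (by omega) ((SC.int lI, SC.ext lJ) :: Γ) (SC.int lI) p.2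
                  (by omega) hρ hp2
                exact ⟨n, F, hF⟩
            obtain ⟨N1, hN1⟩ := hPI
            obtain ⟨N2, hN2⟩ := hPJ
            obtain ⟨rsSplit, hrsSplit⟩ := optMapM_some
              (l := lI.sublists.flatMap fun lH => lI.sublists.filterMap fun lK =>
                if (lI.all fun p => lH.any (brBeq p) || lK.any (brBeq p)) &&
                   (lK.all fun p => lJ.any fun q => q.1 == p.1)
                then some (lH, lK) else none)
              (f := fun hk : List (Name × SC) × List (Name × SC) => do
                let fssH ← optMapM (fun p =>
                    SynthF (max N1 N2) ((SC.int lI, SC.ext lJ) :: Γ) p.2 (SC.ext lJ)) hk.1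
                let fssK ← optMapM (fun p => do
                    let σk ← List.lookup p.1 lJ
                    SynthF (max N1 N2) ((SC.int lI, SC.ext lJ) :: Γ) p.2 σk) hk.2
                pure ((selections fssH).flatMap fun selH =>
                      (selections fssK).map fun selK =>
                        Orch.mu (.choice (List.zipWith (fun p f => (OAct.cIn p.1, f)) hk.1 selH
                          ++ List.zipWith (fun p f => (OAct.cSync p.1, f)) hk.2 selK))))
              (fun hk hhk => by
                obtain ⟨lH, hlH, hfm⟩ := List.mem_flatMap.1 hhk
                obtain ⟨lK, hlK, hif⟩ := List.mem_filterMap.1 hfm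
                by_cases hcond : ((lI.all fun p => lH.any (brBeq p) || lK.any (brBeq p)) &&
                   (lK.all fun p => lJ.any fun q => q.1 == p.1)) = true
                · rw [if_pos hcond] at hif
                  injection hif with hif
                  subst hif
                  have hHsub : ∀ p ∈ lH, p ∈ lI :=
                    fun p hp => (List.mem_sublists.1 hlH).subset hp
                  have hKsub : ∀ p ∈ lK, p ∈ lI :=
                    fun p hp => (List.mem_sublists.1 hlK).subset hp
                  have hKlook : ∀ p ∈ lK, ∃ q ∈ lJ, (q.1 == p.1) = true := by
                    intro p hp
                    have hcond2 := hcond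
                    rw [Bool.and_eq_true] at hcond2
                    have := (List.all_eq_true.1 hcond2.2) p hp
                    simpa using List.any_eq_true.1 this
                  obtain ⟨fssH, hH⟩ := optMapM_some (l := lH)
                    (f := fun p =>
                      SynthF (max N1 N2) ((SC.int lI, SC.ext lJ) :: Γ) p.2 (SC.ext lJ))
                    (fun p hp => by
                      obtain ⟨F, hF⟩ := (hN1 p (hHsub p hp)).1
                      exact ⟨F, synthF_mono (le_max_left N1 N2) hF⟩)
                  obtain ⟨fssK, hK⟩ := optMapM_some (l := lK)
                    (f := fun p => do
                      let σk ← List.lookup p.1 lJ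
                      SynthF (max N1 N2) ((SC.int lI, SC.ext lJ) :: Γ) p.2 σk)
                    (fun p hp => by
                      obtain ⟨σk, hlk⟩ := lookup_exists (hKlook p hp)
                      obtain ⟨F, hF⟩ := (hN1 p (hKsub p hp)).2 σk hlk
                      have hF' := synthF_mono (le_max_left N1 N2) hF
                      exact ⟨F, by simp [hlk, hF']⟩)
                  exact ⟨(selections fssH).flatMap fun selH =>
                      (selections fssK).map fun selK =>
                        Orch.mu (.choice (List.zipWith (fun p f => (OAct.cIn p.1, f)) lH selH
                          ++ List.zipWith (fun p f => (OAct.cSync p.1, f)) lK selK)),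
                    by
                      simp only [Option.pure_def, Option.bind_eq_bind] at hH hK
                      simp [hH, hK]⟩
                · rw [if_neg hcond] at hif; cases hif)
            obtain ⟨rs2, hrs2⟩ := optMapM_some (l := lJ)
              (f := fun p => do
                let fs ← SynthF (max N1 N2) ((SC.int lI, SC.ext lJ) :: Γ) (SC.int lI) p.2
                pure (fs.map fun f => Orch.mu (.choice [(OAct.sOut p.1, f)])))
              (fun p hp => by
                obtain ⟨F, hF⟩ := hN2 p hp
                have hF' := synthF_mono (le_max_right N1 N2) hF
                exact ⟨F.map fun f => Orch.mu (.choice [(OAct.sOut p.1, f)]), by simp [hF']⟩)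
            refine ⟨max N1 N2 + 1, rsSplit.flatten ++ rs2.flatten, ?_⟩
            rw [synthF_int_ext (max N1 N2) Γ hc]
            simp only [Option.pure_def, Option.bind_eq_bind] at hrsSplit hrs2
            simp [hrsSplit, hrs2]

/-- Termination of the synthesis algorithm: for every finite assumption set
Γ and all session contracts ρ, σ, the recursive computation of Synth(Γ,ρ,σ) terminates:
some amount of fuel suffices, and any larger amount of fuel yields the same finite set of
orchestrators, so Synth is a well-defined total function. -/
theorem synth_terminates :
    ∀ (Γ : Ctx) (ρ σ : SC), GoodCtx Γ → IsContract ρ → IsContract σ →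
      ∃ (fuel : ℕ) (F : List Orch), SynthF fuel Γ ρ σ = some F ∧
        ∀ fuel', fuel ≤ fuel' → SynthF fuel' Γ ρ σ = some F := by
  intro Γ ρ σ _ hρ hσ
  obtain ⟨hρmem, hρD, hρW⟩ := SC.cand_spec hρ
  obtain ⟨hσmem, hσD, hσW⟩ := SC.cand_spec hσ
  obtain ⟨n, F, hF⟩ := term_main (SC.cand ρ []) (SC.cand σ []) hρD hσD hρW hσW
      ((2 * muB (SC.cand ρ []) (SC.cand σ []) + 1) * cnt (SC.cand ρ []) (SC.cand σ []) Γ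
        + SC.muD ρ + SC.muD σ) Γ ρ σ le_rfl hρmem hσmem
  exact ⟨n, F, hF, fun fuel' hle => synthF_mono hle hF⟩
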